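/- arXiv:1412.2113 — 3 statements merged into one kernel-verified Lean document; each statement's English description precedes it below -/
import Mathlib

section
/- A collective matrix 𝒳 ∈ 𝔛 admits a joint factorization (of some finite dimension) if and only if 𝒳 belongs to the conic hull of the atom set 𝒜; that is, 𝔛̄ = cone(𝒜). -/
open scoped BigOperators
open MeasureTheory ProbabilityTheory Matrix

/-- The conic hull of a set: all finite nonnegative combinations of its elements. -/
def coneHull {E : Type*} [AddCommMonoid E] [Module ℝ E] (s : Set E) : Set E :=
  {x | ∃ (m : ℕ) (l : Fin m → ℝ) (A : Fin m → E),
    (∀ i, 0 ≤ l i) ∧ (∀ i, A i ∈ s) ∧ x = ∑ i, l i • A i}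

/-- Row span of a matrix. -/
def rowSpan {ι κ : Type*} (M : Matrix ι κ ℝ) : Submodule ℝ (κ → ℝ) :=
  Submodule.span ℝ (Set.range M)

/-- Column span of a matrix. -/
def colSpan {ι κ : Type*} (M : Matrix ι κ ℝ) : Submodule ℝ (ι → ℝ) :=
  Submodule.span ℝ (Set.range Mᵀ)

/-- Orthogonality of two subspaces of `κ → ℝ` with respect to the dot product. -/
def PerpSub {κ : Type*} [Fintype κ] (p q : Submodule ℝ (κ → ℝ)) : Prop :=
  ∀ x ∈ p, ∀ y ∈ q, x ⬝ᵥ y = 0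

/-- Spectral norm (largest singular value) of a square real matrix. -/
noncomputable def specNorm {ι : Type*} [Fintype ι] (A : Matrix ι ι ℝ) : ℝ :=
  ⨆ x : {x : ι → ℝ // ∑ i, (x i)^2 = 1}, Real.sqrt (∑ i, (A.mulVec x.1 i)^2)

/-- Largest eigenvalue of a symmetric real matrix (Rayleigh quotient formulation). -/
noncomputable def lambdaMax {ι : Type*} [Fintype ι] (A : Matrix ι ι ℝ) : ℝ :=
  ⨆ x : {x : ι → ℝ // ∑ i, (x i)^2 = 1}, x.1 ⬝ᵥ A.mulVec x.1

/-- A collective-matrix structure: `K` entity types with `n k` instances each,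
`V` views, view `v` relating entity types `r v` (rows) and `c v` (columns),
with at most one view per unordered pair of (distinct) entity types. -/
structure CMStruct where
  K : ℕ
  V : ℕ
  n : Fin K → ℕ
  r : Fin V → Fin K
  c : Fin V → Fin K
  ne : ∀ v, r v ≠ c v
  uniq : ∀ v w : Fin V, (r v = r w ∧ c v = c w) ∨ (r v = c w ∧ c v = r w) → v = w

namespace CMStruct

variable (S : CMStruct)

/-- The index set of size `N = ∑ k, n k`. -/
abbrev Idx := Σ k : Fin S.K, Fin (S.n k)

/-- `N = ∑ k, n k`. -/
abbrev N : ℕ := ∑ k, S.n k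

/-- The space `𝔛` of collective matrices. -/
abbrev Space := ∀ v : Fin S.V, Matrix (Fin (S.n (S.r v))) (Fin (S.n (S.c v))) ℝ

/-- Inner product `⟨𝒳,𝒴⟩ = ∑ v, tr (Xᵥᵀ Yᵥ)`. -/
noncomputable def inner (X Y : S.Space) : ℝ := ∑ v, Matrix.trace ((X v)ᵀ * Y v)

/-- Frobenius norm `‖𝒳‖_F = √⟨𝒳,𝒳⟩`. -/
noncomputable def frobNorm (X : S.Space) : ℝ := Real.sqrt (S.inner X X)

/-- `P_v` extracts the `(r v, c v)` block of an `N × N` matrix. -/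
def Pv (v : Fin S.V) (Z : Matrix S.Idx S.Idx ℝ) :
    Matrix (Fin (S.n (S.r v))) (Fin (S.n (S.c v))) ℝ :=
  Matrix.of fun i j => Z ⟨S.r v, i⟩ ⟨S.c v, j⟩

/-- Place a matrix as the `(k₁,k₂)` block of an `N × N` matrix (zero elsewhere). -/
def place (k₁ k₂ : Fin S.K) (M : Matrix (Fin (S.n k₁)) (Fin (S.n k₂)) ℝ) :
    Matrix S.Idx S.Idx ℝ :=
  Matrix.of fun a b => ∑ i, ∑ j, if a = ⟨k₁, i⟩ ∧ b = ⟨k₂, j⟩ then M i j else 0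

/-- Symmetric block representation `B(𝒳)`. -/
def B (X : S.Space) : Matrix S.Idx S.Idx ℝ :=
  ∑ v, (S.place (S.r v) (S.c v) (X v) + S.place (S.c v) (S.r v) (X v)ᵀ)

/-- Generators of the atom set: `[P_v(u uᵀ)]_v` for unit vectors `u`. -/
def atomGen : Set S.Space :=
  {A | ∃ u : S.Idx → ℝ, (∑ a, (u a)^2 = 1) ∧ A = fun v => S.Pv v (Matrix.vecMulVec u u)}

/-- The atom set `𝒜 = ext (conv {[P_v(u uᵀ)]_v : ‖u‖₂ = 1})`. -/
def atoms : Set S.Space := Set.extremePoints ℝ (convexHull ℝ S.atomGen)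

/-- `𝒳` admits a joint factorization of some finite dimension. -/
def HasJF (X : S.Space) : Prop :=
  ∃ (R : ℕ) (U : ∀ k : Fin S.K, Matrix (Fin (S.n k)) (Fin R) ℝ),
    ∀ v, X v = U (S.r v) * (U (S.c v))ᵀ

/-- `𝔛̄`: collective matrices admitting a joint factorization. -/
def Xbar : Set S.Space := {X | S.HasJF X}

/-- Collective-matrix rank: minimal dimension of a joint factorization. -/
noncomputable def cmRank (X : S.Space) : ℕ :=
  sInf {R | ∃ U : ∀ k : Fin S.K, Matrix (Fin (S.n k)) (Fin R) ℝ,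
    ∀ v, X v = U (S.r v) * (U (S.c v))ᵀ}

/-- The atomic norm: the gauge of `conv 𝒜`. -/
noncomputable def atomicNorm (X : S.Space) : ℝ := gauge (convexHull ℝ S.atoms) X

/-- The support function `‖𝒳‖_𝒜^* = sup {⟨𝒳,𝒜'⟩ : 𝒜' ∈ 𝒜}`. -/
noncomputable def dualNorm (X : S.Space) : ℝ := sSup {t | ∃ A ∈ S.atoms, t = S.inner X A}

/-- The set of "sign" collective matrices `ℰ(ℳ)`. -/
def signSet (M : S.Space) : Set S.Space :=
  {E | S.atomicNorm M = S.inner E M ∧ S.dualNorm E = 1}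

/-- The entity-relationship graph is bipartite (2-colorable). -/
def Bipartite : Prop := ∃ f : Fin S.K → Bool, ∀ v, f (S.r v) ≠ f (S.c v)

/-- The entity-relationship graph `𝒢`. -/
def graph : SimpleGraph (Fin S.K) :=
  SimpleGraph.fromEdgeSet {e | ∃ v, e = s(S.r v, S.c v)}

/-- The standard basis collective matrix `E^{(v,i,j)}`. -/
def stdBasis (v : Fin S.V) (i : Fin (S.n (S.r v))) (j : Fin (S.n (S.c v))) : S.Space :=
  fun w =>
    if h : v = w then
      Matrix.single (Fin.cast (congrArg (fun x => S.n (S.r x)) h) i)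
        (Fin.cast (congrArg (fun x => S.n (S.c x)) h) j) (1 : ℝ)
    else 0

/-- Index type of view entries `(v, i, j)`. -/
abbrev IdxE := Σ v : Fin S.V, Fin (S.n (S.r v)) × Fin (S.n (S.c v))

/-- Standard basis indexed by a view-entry index. -/
def stdE (e : S.IdxE) : S.Space := S.stdBasis e.1 e.2.1 e.2.2

/-- `‖𝒳‖_max = max_{(v,i,j)} |⟨𝒳, E^{(v,i,j)}⟩|`. -/
noncomputable def maxNorm (X : S.Space) : ℝ := ⨆ e : S.IdxE, |S.inner X (S.stdE e)|

/-- Column index type of the entity matrix `𝕏ₖ` (of cardinality `m k`). -/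
def EIdx (k : Fin S.K) : Type :=
  (Σ v : {v : Fin S.V // S.r v = k}, Fin (S.n (S.c v.1))) ⊕
  (Σ v : {v : Fin S.V // S.c v = k}, Fin (S.n (S.r v.1)))

instance (k : Fin S.K) : Fintype (S.EIdx k) := by unfold EIdx; infer_instance

/-- The entity matrix `𝕏ₖ`: horizontal concatenation of the `X v` with `r v = k` and
the `(X v)ᵀ` with `c v = k`. -/
def entityMat (X : S.Space) (k : Fin S.K) : Matrix (Fin (S.n k)) (S.EIdx k) ℝ :=
  Matrix.of fun i e =>
    match e with
    | Sum.inl ⟨v, j⟩ => X v.1 (Fin.cast (congrArg S.n v.2.symm) i) j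
    | Sum.inr ⟨v, j⟩ => X v.1 j (Fin.cast (congrArg S.n v.2.symm) i)

/-- `m k = ∑ v, (n_{c v}·1[r v = k] + n_{r v}·1[c v = k])`, the column dimension of `𝕏ₖ`. -/
def mcol (k : Fin S.K) : ℕ :=
  ∑ v, ((if S.r v = k then S.n (S.c v) else 0) + (if S.c v = k then S.n (S.r v) else 0))

/-- The generating set of the model subspace `T` (for ground truth `M`). -/
def Tset (M : S.Space) : Set S.Space :=
  {Y | S.HasJF Y ∧ ∀ v,
    rowSpan (S.entityMat Y (S.r v)) ≤ rowSpan (S.entityMat M (S.r v)) ∨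
    rowSpan (S.entityMat Y (S.c v)) ≤ rowSpan (S.entityMat M (S.c v))}

/-- The model subspace `T` (the affine hull of `Tset`, which contains `0`,
hence equals the linear span). -/
def Tsub (M : S.Space) : Submodule ℝ S.Space := Submodule.span ℝ (S.Tset M)

/-- `T^⊥`. -/
def Tperp (M : S.Space) : Set S.Space :=
  {Y | S.HasJF Y ∧ ∀ v,
    PerpSub (rowSpan (Y v)) (rowSpan (M v)) ∧ PerpSub (colSpan (Y v)) (colSpan (M v))}

/-- `T^⊥` as a submodule. -/
def TperpSub (M : S.Space) : Submodule ℝ S.Space := Submodule.span ℝ (S.Tperp M)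

/-- `P` is the orthogonal projection onto the subspace `T` of `𝔛`. -/
def IsOrthProj (T : Submodule ℝ S.Space) (P : S.Space → S.Space) : Prop :=
  (∀ X, P X ∈ T) ∧ (∀ X, ∀ Y ∈ T, S.inner (X - P X) Y = 0)

/-- Sampling probabilities `p(v,i,j)·|Ω|⁻¹` where
`p(v,i,j) = |Ω_{r v}|/(2 n_{r v} m_{r v}) + |Ω_{c v}|/(2 n_{c v} m_{c v})`. -/
noncomputable def pweight (w : Fin S.K → ℝ) (e : S.IdxE) : ℝ :=
  w (S.r e.1) / (2 * (S.n (S.r e.1) : ℝ) * (S.mcol (S.r e.1) : ℝ)) +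
  w (S.c e.1) / (2 * (S.n (S.c e.1) : ℝ) * (S.mcol (S.c e.1) : ℝ))

/-- The operator `R_Ω`. -/
noncomputable def Romega (w : Fin S.K → ℝ) {m : ℕ} (Ω : Fin m → S.IdxE) (X : S.Space) :
    S.Space :=
  ∑ s, (S.inner X (S.stdE (Ω s)) / S.pweight w (Ω s)) • S.stdE (Ω s)

/-- The sampling operator `P_Ω`. -/
noncomputable def Pomega {m : ℕ} (Ω : Fin m → S.IdxE) (X : S.Space) : S.Space :=
  ∑ s, S.inner X (S.stdE (Ω s)) • S.stdE (Ω s)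

/-- `κ_Ω(N) = 3|Ω| √(max_k |Ω_k|/(n_k m_k)) / (min_k |Ω_k|/(n_k m_k))`. -/
noncomputable def kappa (w : Fin S.K → ℝ) (m : ℕ) : ℝ :=
  3 * m * Real.sqrt (⨆ k, w k / ((S.n k : ℝ) * (S.mcol k : ℝ))) /
    (⨅ k, w k / ((S.n k : ℝ) * (S.mcol k : ℝ)))

instance : MeasurableSpace S.IdxE := ⊤

end CMStruct

/-! ### Auxiliary material for the proof -/

set_option maxHeartbeats 1600000

section MinkowskiAux
open Module Set
variable {E : Type*} [NormedAddCommGroup E] [NormedSpace ℝ E] [FiniteDimensional ℝ E]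

omit [FiniteDimensional ℝ E] in
lemma CM_mem_hull_of_forall_eq {s : Set E} {x : E} (hx : x ∈ s) (h : ∀ y ∈ s, y = x) :
    x ∈ convexHull ℝ (s.extremePoints ℝ) := by
  apply subset_convexHull
  exact mem_extremePoints.2 ⟨hx, fun x₁ h₁ x₂ h₂ _ => ⟨h x₁ h₁, h x₂ h₂⟩⟩

lemma CM_endpoint_mem {n : ℕ}
    (IH : ∀ s : Set E, IsCompact s → Convex ℝ s →
      finrank ℝ (vectorSpan ℝ s) ≤ n → s ⊆ convexHull ℝ (s.extremePoints ℝ))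
    {s : Set E} (hcomp : IsCompact s) (hconv : Convex ℝ s)
    (hdim : finrank ℝ (vectorSpan ℝ s) ≤ n + 1)
    {q v : E} (hq : q ∈ s) (hv : v ∈ vectorSpan ℝ s) (_hv0 : v ≠ 0)
    (hno : ∀ t : ℝ, 0 < t → q + t • v ∉ s) :
    q ∈ convexHull ℝ (s.extremePoints ℝ) := by
  classical
  set W := vectorSpan ℝ s with hW
  set A : Set W := {w : W | (w : E) + q ∈ s} with hA
  have hA0 : (0 : W) ∈ A := by simpa [hA] using hq
  have hmemW : ∀ z ∈ s, z - q ∈ W := fun z hz => vsub_mem_vectorSpan ℝ hz hq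
  have hAconv : Convex ℝ A := by
    intro w₁ h₁ w₂ h₂ a b ha hb hab
    have key : ((a • w₁ + b • w₂ : W) : E) + q
        = a • ((w₁ : E) + q) + b • ((w₂ : E) + q) := by
      have h2 : a • q + b • q = q := by rw [← add_smul, hab, one_smul]
      push_cast
      rw [smul_add, smul_add]
      rw [show a • (w₁:E) + a • q + (b • (w₂:E) + b • q)
            = a • (w₁:E) + b • (w₂:E) + (a • q + b • q) by abel, h2]
    show ((a • w₁ + b • w₂ : W) : E) + q ∈ s
    rw [key]
    exact hconv h₁ h₂ ha hb hab
  have himage : (W.subtype '' A : Set E) = (fun z => z - q) '' s := by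
    ext x; constructor
    · rintro ⟨w, hw, rfl⟩; exact ⟨(w : E) + q, hw, by simp⟩
    · rintro ⟨z, hz, rfl⟩
      exact ⟨⟨z - q, hmemW z hz⟩, by simp [hA, hz], rfl⟩
  have hspanA : Submodule.span ℝ A = (⊤ : Submodule ℝ W) := by
    apply Submodule.map_injective_of_injective W.injective_subtype
    rw [Submodule.map_span, Submodule.map_top, Submodule.range_subtype, himage]
    rw [show ((fun z => z - q) '' s) = ((· -ᵥ q) '' s) by simp [vsub_eq_sub]]
    exact (vectorSpan_eq_span_vsub_set_right ℝ hq).symm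
  have hvect : vectorSpan ℝ A = ⊤ := by
    refine top_unique ?_
    rw [← hspanA]
    refine Submodule.span_le.2 fun a ha => ?_
    simpa using vsub_mem_vectorSpan ℝ ha hA0
  have haff : affineSpan ℝ A = ⊤ := by
    rw [AffineSubspace.affineSpan_eq_top_iff_vectorSpan_eq_top_of_nonempty ℝ W W ⟨0, hA0⟩]
    exact hvect
  have hint : (interior A).Nonempty :=
    hAconv.interior_nonempty_iff_affineSpan_eq_top.2 haff
  have h0 : (0 : W) ∉ interior A := by
    intro h0
    set vW : W := ⟨v, hv⟩ with hvW
    have hcont : Continuous fun t : ℝ => t • vW := continuous_id.smul continuous_const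
    have hnh : (fun t : ℝ => t • vW) ⁻¹' interior A ∈ nhds (0 : ℝ) := by
      apply hcont.continuousAt.preimage_mem_nhds
      rw [show (0:ℝ) • vW = 0 by simp]
      exact isOpen_interior.mem_nhds h0
    obtain ⟨ε, hε, hball⟩ := Metric.mem_nhds_iff.1 hnh
    have hmem : (ε/2) • vW ∈ A := by
      refine interior_subset (hball ?_)
      rw [Metric.mem_ball, Real.dist_eq, sub_zero, abs_of_pos (half_pos hε)]
      linarith
    refine hno (ε/2) (half_pos hε) ?_
    simpa [hA, add_comm] using hmem
  obtain ⟨g, hg⟩ := geometric_hahn_banach_open_point hAconv.interior isOpen_interior h0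
  have hglt : ∀ a ∈ interior A, g a < 0 := by
    intro a ha; simpa using hg a ha
  have hsub : A ⊆ closure (interior A) := by
    obtain ⟨a₀, ha₀⟩ := hint
    intro w hw
    have hcont : Continuous fun t : ℝ => a₀ + t • (w - a₀) :=
      continuous_const.add (continuous_id.smul continuous_const)
    have htend : Filter.Tendsto (fun t : ℝ => a₀ + t • (w - a₀))
        (nhdsWithin 1 (Set.Iio 1)) (nhds w) := by
      have h1 := hcont.tendsto 1
      rw [show a₀ + (1:ℝ) • (w - a₀) = w by simp] at h1
      exact h1.mono_left nhdsWithin_le_nhds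
    refine mem_closure_of_tendsto htend ?_
    filter_upwards [Ioo_mem_nhdsLT_of_mem (show (1:ℝ) ∈ Set.Ioc 0 1 by norm_num)]
      with t ht
    have hco : a₀ + t • (w - a₀) = (1 - t) • a₀ + t • w := by
      rw [smul_sub, sub_smul, one_smul]; abel
    rw [hco]
    exact hAconv.combo_interior_closure_mem_interior ha₀ (subset_closure hw)
      (by linarith [ht.2]) (le_of_lt ht.1) (by ring)
  have hgle : ∀ w ∈ A, g w ≤ 0 := by
    intro w hw
    have h1 : closure (interior A) ⊆ {u : W | g u ≤ 0} :=
      closure_minimal (fun u hu => le_of_lt (hglt u hu))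
        (isClosed_le g.continuous continuous_const)
    exact h1 (hsub hw)
  obtain ⟨gE, hgE⟩ := LinearMap.exists_extend (g : W →ₗ[ℝ] ℝ)
  have hgEW : ∀ w : W, gE (w : E) = g w := fun w => LinearMap.congr_fun hgE w
  set F : Set E := {z ∈ s | gE (z - q) = 0} with hF
  have hqF : q ∈ F := ⟨hq, by simp⟩
  have hFle : ∀ z ∈ s, gE (z - q) ≤ 0 := by
    intro z hz
    have h1 := hgle ⟨z - q, hmemW z hz⟩ (by simp [hA, hz])
    rwa [← hgEW] at h1
  have hgEcont : Continuous gE := gE.continuous_of_finiteDimensional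
  have hFcomp : IsCompact F := by
    have h1 : F = s ∩ {z : E | gE (z - q) = 0} := by ext z; simp [hF, Set.mem_sep_iff]
    rw [h1]
    exact hcomp.inter_right
      (isClosed_eq (hgEcont.comp (continuous_id.sub continuous_const)) continuous_const)
  have hcombo : ∀ (a b : ℝ) (z₁ z₂ : E), a + b = 1 →
      a • z₁ + b • z₂ - q = a • (z₁ - q) + b • (z₂ - q) := by
    intro a b z₁ z₂ hab
    have h2 : a • q + b • q = q := by rw [← add_smul, hab, one_smul]
    rw [smul_sub, smul_sub, show a • z₁ - a • q + (b • z₂ - b • q)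
        = a • z₁ + b • z₂ - (a • q + b • q) by abel, h2]
  have hFconv : Convex ℝ F := by
    intro z₁ h₁ z₂ h₂ a b ha hb hab
    refine ⟨hconv h₁.1 h₂.1 ha hb hab, ?_⟩
    rw [hcombo a b z₁ z₂ hab, map_add, _root_.map_smul, _root_.map_smul, h₁.2, h₂.2]
    simp
  have hext : IsExtreme ℝ s F := by
    constructor
    · exact fun z hz => hz.1
    · rintro x₁ hx₁ x₂ hx₂ z hzF ⟨a, b, ha, hb, hab, hzeq⟩
      have e1 : gE (x₁ - q) ≤ 0 := hFle _ hx₁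
      have e2 : gE (x₂ - q) ≤ 0 := hFle _ hx₂
      have hsum : a * gE (x₁ - q) + b * gE (x₂ - q) = 0 := by
        have h1 := hzF.2
        rw [← hzeq, hcombo a b x₁ x₂ hab, map_add, _root_.map_smul, _root_.map_smul] at h1
        simpa [smul_eq_mul] using h1
      have hz1 : gE (x₁ - q) = 0 := by nlinarith
      have hz2 : gE (x₂ - q) = 0 := by nlinarith
      exact ⟨hx₁, hz1⟩
  have hFlt : vectorSpan ℝ F < W := by
    refine lt_of_le_of_ne (vectorSpan_mono ℝ (fun z hz => hz.1)) ?_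
    intro heq
    obtain ⟨a₀, ha₀⟩ := hint
    have hga₀ : g a₀ < 0 := hglt a₀ ha₀
    have hker : vectorSpan ℝ F ≤ LinearMap.ker gE := by
      rw [vectorSpan_def]
      refine Submodule.span_le.2 ?_
      rintro u hu
      rw [Set.mem_vsub] at hu
      obtain ⟨z₁, hz₁, z₂, hz₂, rfl⟩ := hu
      have h3 : gE (z₁ - z₂) = 0 := by
        rw [show z₁ - z₂ = (z₁ - q) - (z₂ - q) by abel, map_sub, hz₁.2, hz₂.2, sub_zero]
      simpa [vsub_eq_sub, LinearMap.mem_ker] using h3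
    have hmem : -((a₀ : W) : E) ∈ vectorSpan ℝ F := by
      rw [heq]
      exact Submodule.neg_mem _ (a₀ : W).2
    have h0' : gE (-((a₀ : W) : E)) = 0 := hker hmem
    rw [map_neg, hgEW] at h0'
    linarith
  have hdimF : finrank ℝ (vectorSpan ℝ F) ≤ n := by
    have h1 := Submodule.finrank_lt_finrank_of_lt hFlt
    omega
  exact convexHull_mono hext.extremePoints_subset_extremePoints
    (IH F hFcomp hFconv hdimF hqF)

/-- Minkowski's theorem: a compact convex set in a finite-dimensional normed space is
the convex hull of its extreme points. -/
theorem CM_minkowski : ∀ (n : ℕ) (s : Set E), IsCompact s → Convex ℝ s →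
    finrank ℝ (vectorSpan ℝ s) ≤ n → s ⊆ convexHull ℝ (s.extremePoints ℝ) := by
  intro n
  induction n with
  | zero =>
    intro s hcomp hconv hdim x hx
    have hbot : vectorSpan ℝ s = ⊥ := by
      have h0 : finrank ℝ (vectorSpan ℝ s) = 0 := Nat.le_zero.1 hdim
      exact Submodule.finrank_eq_zero.1 h0
    apply CM_mem_hull_of_forall_eq hx
    intro y hy
    have h1 : y - x ∈ vectorSpan ℝ s := vsub_mem_vectorSpan ℝ hy hx
    rw [hbot] at h1
    simpa [sub_eq_zero] using h1
  | succ n IH =>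
    intro s hcomp hconv hdim x hx
    by_cases hsing : ∀ y ∈ s, y = x
    · exact CM_mem_hull_of_forall_eq hx hsing
    push_neg at hsing
    obtain ⟨y, hy, hyx⟩ := hsing
    set v := y - x with hv
    have hv0 : v ≠ 0 := sub_ne_zero.2 hyx
    have hvW : v ∈ vectorSpan ℝ s := vsub_mem_vectorSpan ℝ hy hx
    set I : Set ℝ := {t | x + t • v ∈ s} with hI
    have h0I : (0 : ℝ) ∈ I := by simp [hI, hx]
    have h1I : (1 : ℝ) ∈ I := by simp [hI, hv, hy]
    have hIclosed : IsClosed I := by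
      have h1 : I = (fun t : ℝ => x + t • v) ⁻¹' s := rfl
      rw [h1]
      exact IsClosed.preimage (continuous_const.add (continuous_id.smul continuous_const))
        hcomp.isClosed
    obtain ⟨M, hM⟩ := hcomp.isBounded.exists_norm_le
    have hIsub : I ⊆ Set.Icc (-((M + ‖x‖) / ‖v‖)) ((M + ‖x‖) / ‖v‖) := by
      intro t ht
      have h1 : ‖t • v‖ ≤ M + ‖x‖ := by
        have h2 : t • v = (x + t • v) - x := by abel
        rw [h2]
        calc ‖(x + t • v) - x‖ ≤ ‖x + t • v‖ + ‖x‖ := norm_sub_le _ _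
          _ ≤ M + ‖x‖ := by have := hM _ ht; linarith
      rw [norm_smul] at h1
      have hvpos : 0 < ‖v‖ := norm_pos_iff.2 hv0
      have h3 : |t| ≤ (M + ‖x‖) / ‖v‖ := by
        rw [le_div_iff₀ hvpos]; simpa using h1
      exact abs_le.1 h3
    have hIcomp : IsCompact I := isCompact_Icc.of_isClosed_subset hIclosed hIsub
    have hne : I.Nonempty := ⟨0, h0I⟩
    set a := sInf I with haa
    set b := sSup I with hbb
    have haI : a ∈ I := hIcomp.sInf_mem hne
    have hbI : b ∈ I := hIcomp.sSup_mem hne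
    have ha0 : a ≤ 0 := csInf_le hIcomp.bddBelow h0I
    have hb1 : 1 ≤ b := le_csSup hIcomp.bddAbove h1I
    have hqend : ∀ t : ℝ, 0 < t → (x + b • v) + t • v ∉ s := by
      intro t ht hmem
      have h1 : b + t ∈ I := by
        show x + (b + t) • v ∈ s
        rw [add_smul, ← add_assoc]
        exact hmem
      have := le_csSup hIcomp.bddAbove h1
      linarith
    have hpend : ∀ t : ℝ, 0 < t → (x + a • v) + t • (-v) ∉ s := by
      intro t ht hmem
      have h1 : a - t ∈ I := by
        show x + (a - t) • v ∈ s
        rw [sub_smul, sub_eq_add_neg, ← add_assoc, ← smul_neg]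
        exact hmem
      have := csInf_le hIcomp.bddBelow h1
      linarith
    have hq' := CM_endpoint_mem IH hcomp hconv hdim hbI hvW hv0 hqend
    have hp' := CM_endpoint_mem IH hcomp hconv hdim haI
      (Submodule.neg_mem _ hvW) (neg_ne_zero.2 hv0) hpend
    have hba : 0 < b - a := by linarith
    have hc1 : (0:ℝ) ≤ b / (b - a) := div_nonneg (by linarith) (le_of_lt hba)
    have hc2 : (0:ℝ) ≤ -a / (b - a) := div_nonneg (by linarith) (le_of_lt hba)
    have hcsum : b / (b - a) + -a / (b - a) = 1 := by field_simp; ring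
    have hx_comb : (b / (b - a)) • (x + a • v) + (-a / (b - a)) • (x + b • v) = x := by
      rw [smul_add, smul_add, smul_smul, smul_smul]
      rw [show (b / (b - a)) • x + (b / (b - a) * a) • v +
          ((-a / (b - a)) • x + (-a / (b - a) * b) • v)
          = (b / (b - a) + -a / (b - a)) • x
            + (b / (b - a) * a + -a / (b - a) * b) • v by
        rw [add_smul, add_smul]; abel]
      rw [hcsum, show b / (b - a) * a + -a / (b - a) * b = 0 by field_simp; ring]
      simp
    rw [← hx_comb]
    exact (convex_convexHull ℝ _) hp' hq' hc1 hc2 hcsum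

theorem CM_minkowski' {s : Set E} (hcomp : IsCompact s) (hconv : Convex ℝ s) :
    s ⊆ convexHull ℝ (s.extremePoints ℝ) :=
  CM_minkowski _ s hcomp hconv le_rfl

theorem CM_isCompact_convexHull {s : Set E} (hs : IsCompact s) :
    IsCompact (convexHull ℝ s) := by
  rcases s.eq_empty_or_nonempty with rfl | ⟨z₀, hz₀⟩
  · simp
  classical
  set d := finrank ℝ E + 1 with hd
  set f : (Fin d → ℝ) × (Fin d → E) → E := fun p => ∑ i, p.1 i • p.2 i with hf
  have hcont : Continuous f := by
    apply continuous_finset_sum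
    intro i _
    exact ((continuous_apply i).comp continuous_fst).smul
      ((continuous_apply i).comp continuous_snd)
  set K := (stdSimplex ℝ (Fin d)) ×ˢ (Set.univ.pi fun _ : Fin d => s) with hK
  have hKcomp : IsCompact K := (isCompact_stdSimplex ℝ _).prod (isCompact_univ_pi fun _ => hs)
  have himg : convexHull ℝ s = f '' K := by
    apply Subset.antisymm
    · intro x hx
      obtain ⟨ι, hfin, z, w, hzs, hai, hwpos, hwsum, hws⟩ :=
        eq_pos_convex_span_of_mem_convexHull hx
      have hcard : Fintype.card ι ≤ d := by
        have h1 := hai.card_le_finrank_succ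
        have h2 : finrank ℝ (vectorSpan ℝ (Set.range z)) ≤ finrank ℝ E :=
          (vectorSpan ℝ (Set.range z)).finrank_le
        omega
      obtain ⟨e⟩ : Nonempty (ι ↪ Fin d) :=
        Function.Embedding.nonempty_of_card_le (by simpa using hcard)
      set w' : Fin d → ℝ := fun j => ∑ i ∈ Finset.univ.filter (fun i => e i = j), w i with hw'
      set z' : Fin d → E := fun j => if h : ∃ i, e i = j then z h.choose else z₀ with hz'
      refine ⟨(w', z'), ⟨⟨?_, ?_⟩, ?_⟩, ?_⟩
      · intro j; exact Finset.sum_nonneg fun i _ => (hwpos i).le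
      · rw [← hwsum]; exact Finset.sum_fiberwise _ _ _
      · intro j _
        dsimp only [z']
        split
        · next h => exact hzs ⟨h.choose, rfl⟩
        · exact hz₀
      · show ∑ j, w' j • z' j = x
        rw [← hws, ← Finset.sum_fiberwise Finset.univ (fun i => e i) (fun i => w i • z i)]
        apply Finset.sum_congr rfl
        intro j _
        rw [hw', Finset.sum_smul]
        apply Finset.sum_congr rfl
        intro i hi
        have hij : e i = j := (Finset.mem_filter.1 hi).2
        have hex : ∃ i', e i' = j := ⟨i, hij⟩
        have hch : hex.choose = i := e.injective (hex.choose_spec.trans hij.symm)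
        simp only [z', dif_pos hex, hch]
    · rintro _ ⟨⟨w, z⟩, ⟨hw, hz⟩, rfl⟩
      exact (convex_convexHull ℝ s).sum_mem (fun i _ => hw.1 i) hw.2
        (fun i _ => subset_convexHull ℝ s (hz i (Set.mem_univ i)))
  rw [himg]
  exact hKcomp.image hcont

end MinkowskiAux

section ConeHullAux
variable {E : Type*} [AddCommMonoid E] [Module ℝ E]

lemma coneHull_zero_mem (s : Set E) : (0 : E) ∈ coneHull s :=
  ⟨0, Fin.elim0, Fin.elim0, fun i => i.elim0, fun i => i.elim0, by simp⟩

lemma mem_coneHull_of_mem {s : Set E} {x : E} (hx : x ∈ s) : x ∈ coneHull s :=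
  ⟨1, fun _ => 1, fun _ => x, fun _ => zero_le_one, fun _ => hx, by simp⟩

lemma coneHull_add {s : Set E} {x y : E} (hx : x ∈ coneHull s) (hy : y ∈ coneHull s) :
    x + y ∈ coneHull s := by
  obtain ⟨m, l, A, hl, hA, rfl⟩ := hx
  obtain ⟨m', l', A', hl', hA', rfl⟩ := hy
  refine ⟨m + m', Fin.append l l', Fin.append A A', ?_, ?_, ?_⟩
  · intro i
    refine Fin.addCases (fun j => ?_) (fun j => ?_) i
    · rw [Fin.append_left]; exact hl j
    · rw [Fin.append_right]; exact hl' j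
  · intro i
    refine Fin.addCases (fun j => ?_) (fun j => ?_) i
    · rw [Fin.append_left]; exact hA j
    · rw [Fin.append_right]; exact hA' j
  · rw [Fin.sum_univ_add]
    simp [Fin.append_left, Fin.append_right]

lemma coneHull_smul {s : Set E} {t : ℝ} (ht : 0 ≤ t) {x : E} (hx : x ∈ coneHull s) :
    t • x ∈ coneHull s := by
  obtain ⟨m, l, A, hl, hA, rfl⟩ := hx
  exact ⟨m, fun i => t * l i, A, fun i => mul_nonneg ht (hl i), hA,
    by rw [Finset.smul_sum]; simp [smul_smul]⟩

lemma coneHull_convex (s : Set E) : Convex ℝ (coneHull s) :=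
  fun _ hx _ hy a b ha hb _ => coneHull_add (coneHull_smul ha hx) (coneHull_smul hb hy)

lemma convexHull_subset_coneHull (s : Set E) : convexHull ℝ s ⊆ coneHull s :=
  convexHull_min (fun _ hx => mem_coneHull_of_mem hx) (coneHull_convex s)

lemma coneHull_sum {s : Set E} {ι : Type*} (t : Finset ι) (f : ι → E)
    (h : ∀ i ∈ t, f i ∈ coneHull s) : ∑ i ∈ t, f i ∈ coneHull s :=
  Finset.sum_induction f (· ∈ coneHull s) (fun _ _ ha hb => coneHull_add ha hb)
    (coneHull_zero_mem s) h

end ConeHullAux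

section JFAux
variable (S : CMStruct)

lemma CMStruct.hasJF_zero : S.HasJF 0 :=
  ⟨0, fun _ => 0, fun v => by ext i j; simp [Matrix.mul_apply]⟩

lemma CMStruct.hasJF_add {X Y : S.Space} (hX : S.HasJF X) (hY : S.HasJF Y) :
    S.HasJF (X + Y) := by
  obtain ⟨R₁, U₁, hU₁⟩ := hX
  obtain ⟨R₂, U₂, hU₂⟩ := hY
  refine ⟨R₁ + R₂, fun k => Matrix.of fun i ρ => Fin.append (U₁ k i) (U₂ k i) ρ, fun v => ?_⟩
  ext i j
  have h1 : (X + Y) v i j = X v i j + Y v i j := rfl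
  rw [h1, hU₁ v, hU₂ v]
  simp only [Matrix.mul_apply, Matrix.transpose_apply, Matrix.of_apply]
  rw [Fin.sum_univ_add]
  simp [Fin.append_left, Fin.append_right]

lemma CMStruct.hasJF_smul {X : S.Space} {t : ℝ} (ht : 0 ≤ t) (hX : S.HasJF X) :
    S.HasJF (t • X) := by
  obtain ⟨R, U, hU⟩ := hX
  refine ⟨R, fun k => Real.sqrt t • U k, fun v => ?_⟩
  ext i j
  have h1 : (t • X) v i j = t * X v i j := rfl
  rw [h1, hU v]
  simp only [Matrix.mul_apply, Matrix.transpose_apply, Matrix.smul_apply, smul_eq_mul,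
    Finset.mul_sum]
  apply Finset.sum_congr rfl
  intro ρ _
  rw [show Real.sqrt t * U (S.r v) i ρ * (Real.sqrt t * U (S.c v) j ρ)
      = (Real.sqrt t * Real.sqrt t) * (U (S.r v) i ρ * U (S.c v) j ρ) by ring,
    Real.mul_self_sqrt ht]

lemma CMStruct.atomGen_hasJF {A : S.Space} (hA : A ∈ S.atomGen) : S.HasJF A := by
  obtain ⟨u, _, rfl⟩ := hA
  refine ⟨1, fun k => Matrix.of fun i _ => u ⟨k, i⟩, fun v => ?_⟩
  ext i j
  simp [CMStruct.Pv, Matrix.mul_apply, Matrix.vecMulVec_apply, Fin.sum_univ_one]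

lemma CMStruct.xbar_convex : Convex ℝ S.Xbar :=
  fun _ hx _ hy a b ha hb _ => S.hasJF_add (S.hasJF_smul ha hx) (S.hasJF_smul hb hy)

end JFAux

section ApplyMink

attribute [local instance] Matrix.normedAddCommGroup Matrix.normedSpace

lemma CMStruct.atomGen_subset_coneHull (S : CMStruct) :
    S.atomGen ⊆ coneHull S.atoms := by
  classical
  set G : (S.Idx → ℝ) → S.Space := fun u => fun v => S.Pv v (Matrix.vecMulVec u u) with hG
  have hGcont : Continuous G := by
    apply continuous_pi
    intro v
    apply continuous_matrix
    intro i j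
    exact ((continuous_apply _).mul (continuous_apply _))
  set Sp : Set (S.Idx → ℝ) := {u | ∑ a, (u a)^2 = 1} with hSp
  have hSpcomp : IsCompact Sp := by
    have hclosed : IsClosed Sp :=
      isClosed_eq (by continuity) continuous_const
    have hsub : Sp ⊆ Metric.closedBall 0 1 := by
      intro u hu
      rw [Metric.mem_closedBall, dist_zero_right]
      refine (pi_norm_le_iff_of_nonneg zero_le_one).2 fun a => ?_
      rw [Real.norm_eq_abs, ← Real.sqrt_one, ← abs_of_nonneg (abs_nonneg (u a)),
        show |(|u a|)| = Real.sqrt ((u a)^2) by rw [Real.sqrt_sq_eq_abs]; simp]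
      apply Real.sqrt_le_sqrt
      rw [← hu]
      exact Finset.single_le_sum (fun b _ => sq_nonneg (u b)) (Finset.mem_univ a)
    exact (isCompact_closedBall _ _).of_isClosed_subset hclosed hsub
  have hgen_eq : S.atomGen = G '' Sp := by
    ext A
    constructor
    · rintro ⟨u, hu, rfl⟩; exact ⟨u, hu, rfl⟩
    · rintro ⟨u, hu, rfl⟩; exact ⟨u, hu, rfl⟩
  have hagcomp : IsCompact S.atomGen := by
    rw [hgen_eq]; exact hSpcomp.image hGcont
  have hhull : IsCompact (convexHull ℝ S.atomGen) := CM_isCompact_convexHull hagcomp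
  have hmink : convexHull ℝ S.atomGen ⊆ convexHull ℝ S.atoms :=
    CM_minkowski' hhull (convex_convexHull ℝ _)
  intro g hg
  exact convexHull_subset_coneHull _ (hmink (subset_convexHull ℝ _ hg))

end ApplyMink

/-- A collective matrix admits a joint factorization iff it lies in the
conic hull of the atom set: `𝔛̄ = cone 𝒜`. -/
theorem collective_matrix_jointFactorization_iff_coneHull (S : CMStruct) :
    S.Xbar = coneHull S.atoms := by
  classical
  apply Set.Subset.antisymm
  · rintro X ⟨R, U, hU⟩
    have hdecomp : X = ∑ ρ : Fin R,
        (fun v => S.Pv v (Matrix.vecMulVec (fun a => U a.1 a.2 ρ) (fun a => U a.1 a.2 ρ))) := by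
      funext v
      ext i j
      rw [hU v]
      simp [Matrix.mul_apply, CMStruct.Pv, Matrix.vecMulVec_apply,
        Finset.sum_apply, Matrix.sum_apply]
    rw [hdecomp]
    apply coneHull_sum
    intro ρ _
    set w : S.Idx → ℝ := fun a => U a.1 a.2 ρ with hw
    have hc0 : 0 ≤ ∑ a, (w a)^2 := Finset.sum_nonneg fun a _ => sq_nonneg _
    rcases eq_or_lt_of_le hc0 with hc | hc
    · have hw0 : ∀ a, w a = 0 := by
        intro a
        have := (Finset.sum_eq_zero_iff_of_nonneg (fun b _ => sq_nonneg (w b))).1 hc.symm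
          a (Finset.mem_univ a)
        exact (pow_eq_zero_iff two_ne_zero).1 this
      have hz : (fun v => S.Pv v (Matrix.vecMulVec w w)) = (0 : S.Space) := by
        funext v; ext i j
        simp [CMStruct.Pv, Matrix.vecMulVec_apply, hw0]
      rw [hz]
      exact coneHull_zero_mem _
    · set c := ∑ a, (w a)^2 with hcdef
      set u : S.Idx → ℝ := fun a => w a / Real.sqrt c with hu
      have hsqrt : Real.sqrt c > 0 := Real.sqrt_pos.2 hc
      have hunit : ∑ a, (u a)^2 = 1 := by
        simp only [hu, div_pow, Real.sq_sqrt hc.le]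
        rw [← Finset.sum_div, ← hcdef, div_self (ne_of_gt hc)]
      have hgen : (fun v => S.Pv v (Matrix.vecMulVec u u)) ∈ S.atomGen := ⟨u, hunit, rfl⟩
      have hterm : (fun v => S.Pv v (Matrix.vecMulVec w w))
          = c • (fun v => S.Pv v (Matrix.vecMulVec u u)) := by
        funext v; ext i j
        have h1 : (c • (fun v => S.Pv v (Matrix.vecMulVec u u)) : S.Space) v i j
            = c * (S.Pv v (Matrix.vecMulVec u u) i j) := rfl
        rw [h1]
        simp only [CMStruct.Pv, Matrix.of_apply, Matrix.vecMulVec_apply, hu]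
        rw [div_mul_div_comm, ← Real.sqrt_mul_self hc.le]
        field_simp
        rw [Real.sq_sqrt (Real.sqrt_nonneg _)]
      rw [hterm]
      exact coneHull_smul hc.le (S.atomGen_subset_coneHull hgen)
  · rintro X ⟨m, l, A, hl, hA, rfl⟩
    have hatoms : S.atoms ⊆ S.Xbar := by
      intro B hB
      have h1 : B ∈ convexHull ℝ S.atomGen := extremePoints_subset hB
      exact convexHull_min (fun g hg => S.atomGen_hasJF hg) S.xbar_convex h1
    show ∑ i, l i • A i ∈ S.Xbar
    refine Finset.sum_induction _ (· ∈ S.Xbar)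
      (fun _ _ ha hb => S.hasJF_add ha hb) S.hasJF_zero ?_
    intro i _
    exact S.hasJF_smul (hl i) (hatoms (hA i))
end

section
/- For every 𝒳 ∈ 𝔛̄, the atomic norm satisfies ‖𝒳‖_𝒜 = min{ tr(Z) : Z an N×N symmetric positive semidefinite matrix with P_v(Z) = X_v for all v = 1,…,V }. -/
open scoped BigOperators
open MeasureTheory ProbabilityTheory Matrix

open Set Finset

instance matrixLocallyConvex {m n : Type*} : LocallyConvexSpace ℝ (Matrix m n ℝ) :=
  inferInstanceAs (LocallyConvexSpace ℝ (m → n → ℝ))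

theorem myIsCompact_convexHull {E : Type*} [AddCommGroup E] [Module ℝ E]
    [TopologicalSpace E] [IsTopologicalAddGroup E] [ContinuousSMul ℝ E]
    [FiniteDimensional ℝ E] {s : Set E} (hs : IsCompact s) :
    IsCompact (convexHull ℝ s) := by
  classical
  set m := Module.finrank ℝ E + 1 with hm
  have hK : IsCompact ((stdSimplex ℝ (Fin m)) ×ˢ (Set.univ.pi fun _ : Fin m => s)) :=
    (isCompact_stdSimplex ℝ (Fin m)).prod (isCompact_univ_pi fun _ => hs)
  have hcont : Continuous fun p : (Fin m → ℝ) × (Fin m → E) => ∑ i, p.1 i • p.2 i :=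
    continuous_finset_sum _ fun i _ =>
      ((continuous_apply i).comp continuous_fst).smul ((continuous_apply i).comp continuous_snd)
  have himg : (fun p : (Fin m → ℝ) × (Fin m → E) => ∑ i, p.1 i • p.2 i) ''
      ((stdSimplex ℝ (Fin m)) ×ˢ (Set.univ.pi fun _ : Fin m => s)) = convexHull ℝ s := by
    apply Set.Subset.antisymm
    · rintro x ⟨⟨w, z⟩, ⟨hw, hz⟩, rfl⟩
      exact (convex_convexHull ℝ s).sum_mem (fun i _ => hw.1 i) hw.2
        (fun i _ => subset_convexHull ℝ s (hz i (Set.mem_univ i)))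
    · intro x hx
      obtain ⟨ι, hι, z, w, hzs, hind, hwpos, hwsum, hx⟩ :=
        eq_pos_convex_span_of_mem_convexHull hx
      have hcard : Fintype.card ι ≤ m := by
        refine le_trans hind.card_le_finrank_succ (Nat.add_le_add_right (Submodule.finrank_le _) 1)
      obtain ⟨φ⟩ := Function.Embedding.nonempty_of_card_le
        (by simpa using hcard : Fintype.card ι ≤ Fintype.card (Fin m))
      have hιne : Nonempty ι := by
        by_contra h
        rw [not_nonempty_iff] at h
        rw [Finset.univ_eq_empty, Finset.sum_empty] at hwsum
        norm_num at hwsum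
      obtain ⟨i₀⟩ := hιne
      refine ⟨(fun k => ∑ i, if φ i = k then w i else 0,
               fun k => if h : ∃ i, φ i = k then z h.choose else z i₀), ⟨⟨?_, ?_⟩, ?_⟩, ?_⟩
      · intro k
        refine Finset.sum_nonneg fun i _ => ?_
        split
        · exact (hwpos _).le
        · exact le_rfl
      · rw [Finset.sum_comm]
        rw [← hwsum]
        refine Finset.sum_congr rfl fun i _ => ?_
        simp
      · intro k _
        show (if h : ∃ i, φ i = k then z h.choose else z i₀) ∈ s
        split
        · exact hzs ⟨_, rfl⟩
        · exact hzs ⟨_, rfl⟩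
      · rw [← hx]
        show (∑ k : Fin m, (∑ i, if φ i = k then w i else 0) •
            (if h : ∃ i, φ i = k then z h.choose else z i₀)) = ∑ i, w i • z i
        have : ∀ k, (∑ i, if φ i = k then w i else 0) •
            (if h : ∃ i, φ i = k then z h.choose else z i₀) =
            ∑ i, if φ i = k then w i • (if h : ∃ i, φ i = k then z h.choose else z i₀) else 0 := by
          intro k
          rw [Finset.sum_smul]
          refine Finset.sum_congr rfl fun i _ => ?_
          split <;> simp
        rw [Finset.sum_congr rfl fun k _ => this k, Finset.sum_comm]
        refine Finset.sum_congr rfl fun i _ => ?_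
        have h1 : ∀ k, (if φ i = k then w i • (if h : ∃ j, φ j = k then z h.choose else z i₀) else 0)
            = if φ i = k then w i • z i else 0 := by
          intro k
          by_cases h : φ i = k
          · subst h
            have hex : ∃ j, φ j = φ i := ⟨i, rfl⟩
            rw [if_pos rfl, if_pos rfl, dif_pos hex]
            have := hex.choose_spec
            have : hex.choose = i := φ.injective this
            rw [this]
          · rw [if_neg h, if_neg h]
        rw [Finset.sum_congr rfl fun k _ => h1 k]
        simp
  rw [← himg]
  exact hK.image hcont
open Set Finset Matrix

section PSD
variable {n : Type*} [Fintype n] [DecidableEq n]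

lemma myQuad {Z : Matrix n n ℝ} (hZ : Z.PosSemidef) (x : n → ℝ) : 0 ≤ x ⬝ᵥ (Z *ᵥ x) := by
  have := hZ.dotProduct_mulVec_nonneg x
  simpa using this

lemma psd_diag_nonneg {Z : Matrix n n ℝ} (hZ : Z.PosSemidef) (a : n) : 0 ≤ Z a a := by
  have := myQuad hZ (Pi.single a 1)
  simpa [Matrix.mulVec_single, single_dotProduct] using this

lemma my_trace_eq (Z : Matrix n n ℝ) : Z.trace = ∑ a, Z a a := rfl

lemma psd_trace_nonneg {Z : Matrix n n ℝ} (hZ : Z.PosSemidef) : 0 ≤ Z.trace := by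
  rw [my_trace_eq]
  exact Finset.sum_nonneg fun a _ => psd_diag_nonneg hZ a

lemma psd_symm_entry {Z : Matrix n n ℝ} (hZ : Z.PosSemidef) (a b : n) : Z b a = Z a b := by
  have := congrFun (congrFun hZ.1 a) b
  simpa [Matrix.conjTranspose_apply] using this

lemma psd_abs_entry_le_trace {Z : Matrix n n ℝ} (hZ : Z.PosSemidef) (a b : n) :
    |Z a b| ≤ Z.trace := by
  by_cases hab : a = b
  · subst hab
    rw [abs_of_nonneg (psd_diag_nonneg hZ a), my_trace_eq]
    exact Finset.single_le_sum (f := fun c => Z c c) (fun c _ => psd_diag_nonneg hZ c)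
      (Finset.mem_univ a)
  · have hsum : Z a a + Z b b ≤ Z.trace := by
      have h1 : ∑ c ∈ ({a, b} : Finset n), Z c c = Z a a + Z b b := Finset.sum_pair hab
      have h2 : ∑ c ∈ ({a, b} : Finset n), Z c c ≤ ∑ c, Z c c :=
        Finset.sum_le_sum_of_subset_of_nonneg (Finset.subset_univ _)
          (fun c _ _ => psd_diag_nonneg hZ c)
      rw [my_trace_eq]
      linarith
    have hba := psd_symm_entry hZ a b
    have h1 := myQuad hZ (Pi.single a 1 + Pi.single b 1)
    have h2 := myQuad hZ (Pi.single a 1 - Pi.single b 1)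
    rw [Matrix.mulVec_add, add_dotProduct, dotProduct_add,
      dotProduct_add] at h1
    rw [Matrix.mulVec_sub, sub_dotProduct, dotProduct_sub,
      dotProduct_sub] at h2
    simp only [Matrix.mulVec_single_one, Matrix.col_apply, single_dotProduct, mul_one, one_mul] at h1 h2
    have htr := psd_trace_nonneg hZ
    rw [abs_le]
    constructor <;> nlinarith [hba]

lemma dot_vecMulVec (u x : n → ℝ) :
    x ⬝ᵥ ((Matrix.vecMulVec u u) *ᵥ x) = (u ⬝ᵥ x) * (u ⬝ᵥ x) := by
  calc x ⬝ᵥ ((Matrix.vecMulVec u u) *ᵥ x)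
      = ∑ a, ∑ b, x a * ((u a * u b) * x b) := by
        simp [dotProduct, Matrix.mulVec, Matrix.vecMulVec_apply, Finset.mul_sum]
    _ = ∑ a, ∑ b, (u a * x a) * (u b * x b) := by
        refine Finset.sum_congr rfl fun a _ => Finset.sum_congr rfl fun b _ => by ring
    _ = (u ⬝ᵥ x) * (u ⬝ᵥ x) := by
        show (∑ a, ∑ b, (u a * x a) * (u b * x b)) = (∑ a, u a * x a) * (∑ b, u b * x b)
        rw [Finset.sum_mul_sum]

lemma dot_sum_mulVec {ι : Type*} (s : Finset ι) (M : ι → Matrix n n ℝ) (x : n → ℝ) :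
    x ⬝ᵥ ((∑ i ∈ s, M i) *ᵥ x) = ∑ i ∈ s, x ⬝ᵥ (M i *ᵥ x) := by
  classical
  induction s using Finset.induction with
  | empty => simp
  | insert a s h ih =>
    rw [Finset.sum_insert h, Finset.sum_insert h, Matrix.add_mulVec,
      dotProduct_add, ih]

lemma psd_sum_vecMulVec {ι : Type*} (s : Finset ι) (c : ι → ℝ) (u : ι → n → ℝ)
    (hc : ∀ i ∈ s, 0 ≤ c i) :
    (∑ i ∈ s, c i • Matrix.vecMulVec (u i) (u i)).PosSemidef := by
  refine Matrix.PosSemidef.of_dotProduct_mulVec_nonneg ?_ ?_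
  · show Matrix.conjTranspose _ = _
    rw [Matrix.conjTranspose_sum]
    refine Finset.sum_congr rfl fun i _ => ?_
    ext a b
    simp [Matrix.conjTranspose_apply, Matrix.vecMulVec_apply, mul_comm]
  · intro x
    have hx : star x = x := funext fun i => star_trivial _
    rw [hx, dot_sum_mulVec]
    refine Finset.sum_nonneg fun i hi => ?_
    rw [Matrix.smul_mulVec]
    have : x ⬝ᵥ (c i • ((Matrix.vecMulVec (u i) (u i)) *ᵥ x)) =
        c i * (x ⬝ᵥ ((Matrix.vecMulVec (u i) (u i)) *ᵥ x)) := by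
      simp [dotProduct, Finset.mul_sum]
      exact Finset.sum_congr rfl fun a _ => by ring
    rw [this, dot_vecMulVec]
    exact mul_nonneg (hc i hi) (mul_self_nonneg _)

lemma psd_decomp {Z : Matrix n n ℝ} (hZ : Z.PosSemidef) (a₀ : n) :
    ∃ (lam : n → ℝ) (u : n → n → ℝ), (∀ i, 0 ≤ lam i) ∧ (∀ i, ∑ a, (u i a)^2 = 1) ∧
      (∑ i, lam i = Z.trace) ∧ (∀ a b, Z a b = ∑ i, lam i * (u i a * u i b)) := by
  have hBex : ∃ B : Matrix n n ℝ, Z = Bᴴ * B := by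
    open scoped MatrixOrder Matrix.Norms.L2Operator in
    obtain ⟨B, hB⟩ := CStarAlgebra.nonneg_iff_eq_star_mul_self.mp hZ.nonneg
    exact ⟨B, hB⟩
  obtain ⟨B, hB⟩ := hBex
  have hBe : ∀ a b, Z a b = ∑ i, B i a * B i b := by
    intro a b
    rw [hB]
    simp [Matrix.mul_apply, Matrix.conjTranspose_apply]
  set lam : n → ℝ := fun i => ∑ a, (B i a)^2 with hlam
  have hlam0 : ∀ i, 0 ≤ lam i := fun i => Finset.sum_nonneg fun a _ => sq_nonneg _
  classical
  set u : n → n → ℝ := fun i =>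
    if lam i = 0 then Pi.single a₀ 1 else (Real.sqrt (lam i))⁻¹ • (fun a => B i a) with hu
  refine ⟨lam, u, hlam0, ?_, ?_, ?_⟩
  · intro i
    by_cases h : lam i = 0
    · simp only [hu, if_pos h]
      simp [Pi.single_apply, sq, Finset.sum_ite_eq']
    · have hpos : 0 < lam i := lt_of_le_of_ne (hlam0 i) (Ne.symm h)
      simp only [hu, if_neg h, Pi.smul_apply, smul_eq_mul]
      have : ∀ a, ((Real.sqrt (lam i))⁻¹ * B i a)^2 = (lam i)⁻¹ * (B i a)^2 := by
        intro a
        rw [mul_pow, ← Real.sqrt_inv, Real.sq_sqrt (inv_nonneg.mpr (hlam0 i))]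
      rw [Finset.sum_congr rfl fun a _ => this a, ← Finset.mul_sum]
      exact inv_mul_cancel₀ h
  · have htr : Z.trace = ∑ a, ∑ i, B i a * B i a := by
      rw [my_trace_eq]
      exact Finset.sum_congr rfl fun a _ => hBe a a
    rw [htr, Finset.sum_comm]
    refine Finset.sum_congr rfl fun i _ => ?_
    simp [hlam, pow_two]
  · intro a b
    rw [hBe a b]
    refine Finset.sum_congr rfl fun i _ => ?_
    by_cases h : lam i = 0
    · have hz : ∀ a, B i a = 0 := by
        intro a
        have := (Finset.sum_eq_zero_iff_of_nonneg (fun a (_ : a ∈ Finset.univ) => sq_nonneg (B i a))).mp h a (Finset.mem_univ a)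
        exact (pow_eq_zero_iff (two_ne_zero)).mp this
      rw [hz a, hz b, h]
      ring
    · have hpos : 0 < lam i := lt_of_le_of_ne (hlam0 i) (Ne.symm h)
      have hs : Real.sqrt (lam i) * Real.sqrt (lam i) = lam i := Real.mul_self_sqrt (hlam0 i)
      have hsne : Real.sqrt (lam i) ≠ 0 := by positivity
      simp only [hu, if_neg h, Pi.smul_apply, smul_eq_mul]
      rw [← hs]
      field_simp
      rw [Real.sqrt_sq (Real.sqrt_nonneg _)]

open scoped Pointwise

namespace CMStruct
variable (S : CMStruct)

def atomOf (u : S.Idx → ℝ) : S.Space := fun v => S.Pv v (Matrix.vecMulVec u u)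

lemma atomOf_mem_atomGen {u : S.Idx → ℝ} (hu : ∑ a, (u a)^2 = 1) : S.atomOf u ∈ S.atomGen :=
  ⟨u, hu, rfl⟩

lemma mem_atomGen_iff (A : S.Space) :
    A ∈ S.atomGen ↔ ∃ u : S.Idx → ℝ, (∑ a, (u a)^2 = 1) ∧ A = S.atomOf u := Iff.rfl

lemma Pv_apply (v : Fin S.V) (Z : Matrix S.Idx S.Idx ℝ) (i j) :
    S.Pv v Z i j = Z ⟨S.r v, i⟩ ⟨S.c v, j⟩ := rfl

lemma Pv_sum {ι : Type*} (v : Fin S.V) (s : Finset ι) (f : ι → Matrix S.Idx S.Idx ℝ) :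
    S.Pv v (∑ i ∈ s, f i) = ∑ i ∈ s, S.Pv v (f i) := by
  ext p q
  simp [CMStruct.Pv, Matrix.sum_apply]

lemma feas_mem_smul (X : S.Space) (Z : Matrix S.Idx S.Idx ℝ) (hZ : Z.PosSemidef)
    (hb : ∀ v, S.Pv v Z = X v) (ht : 0 < Z.trace) :
    X ∈ Z.trace • convexHull ℝ S.atomGen := by
  have hne : Nonempty S.Idx := by
    by_contra h
    rw [not_nonempty_iff] at h
    have : Z.trace = 0 := by
      rw [my_trace_eq, Finset.univ_eq_empty, Finset.sum_empty]
    linarith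
  obtain ⟨a₀⟩ := hne
  obtain ⟨lam, u, hlam0, hunit, hlamsum, hdec⟩ := psd_decomp hZ a₀
  have hXsum : X = ∑ i, lam i • S.atomOf (u i) := by
    funext v
    rw [← hb v]
    ext p q
    rw [Pv_apply, hdec]
    simp [Finset.sum_apply, atomOf, CMStruct.Pv, Matrix.vecMulVec_apply, Matrix.sum_apply]
  have htne : Z.trace ≠ 0 := ne_of_gt ht
  refine Set.mem_smul_set.mpr ⟨∑ i, (lam i / Z.trace) • S.atomOf (u i), ?_, ?_⟩
  · refine (convex_convexHull ℝ _).sum_mem (fun i _ => div_nonneg (hlam0 i) (le_of_lt ht))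
      ?_ (fun i _ => subset_convexHull ℝ _ (S.atomOf_mem_atomGen (hunit i)))
    rw [← Finset.sum_div, hlamsum]
    field_simp
  · rw [Finset.smul_sum, hXsum]
    refine Finset.sum_congr rfl fun i _ => ?_
    rw [smul_smul]
    congr 1
    field_simp

lemma feas_trace_zero (X : S.Space) (Z : Matrix S.Idx S.Idx ℝ) (hZ : Z.PosSemidef)
    (hb : ∀ v, S.Pv v Z = X v) (ht : Z.trace = 0) : X = 0 := by
  funext v
  rw [← hb v]
  ext p q
  rw [Pv_apply]
  have h1 := psd_abs_entry_le_trace hZ ⟨S.r v, p⟩ ⟨S.c v, q⟩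
  rw [ht] at h1
  have := abs_nonneg (Z ⟨S.r v, p⟩ ⟨S.c v, q⟩)
  have h0 : Z ⟨S.r v, p⟩ ⟨S.c v, q⟩ = 0 := abs_eq_zero.mp (le_antisymm h1 this)
  simpa using h0

lemma mem_smul_feas (X : S.Space) {t : ℝ} (ht : 0 < t)
    (h : X ∈ t • convexHull ℝ S.atomGen) :
    ∃ Z : Matrix S.Idx S.Idx ℝ, Z.PosSemidef ∧ (∀ v, S.Pv v Z = X v) ∧ Z.trace = t := by
  obtain ⟨y, hy, rfl⟩ := Set.mem_smul_set.mp h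
  obtain ⟨ι, hι, z, w, hzs, hind, hwpos, hwsum, hy'⟩ :=
    eq_pos_convex_span_of_mem_convexHull hy
  choose u hu hz using fun i => (hzs (Set.mem_range_self i) :
    z i ∈ S.atomGen)
  refine ⟨∑ i, (t * w i) • Matrix.vecMulVec (u i) (u i), ?_, ?_, ?_⟩
  · exact psd_sum_vecMulVec Finset.univ _ _ (fun i _ => mul_nonneg ht.le (hwpos i).le)
  · intro v
    rw [Pv_sum]
    have : ∀ i, S.Pv v ((t * w i) • Matrix.vecMulVec (u i) (u i)) =
        (t * w i) • (z i v) := by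
      intro i
      ext p q
      rw [Pv_apply]
      rw [hz i]
      simp [atomOf, CMStruct.Pv, Matrix.vecMulVec_apply, mul_assoc]
    rw [Finset.sum_congr rfl fun i _ => this i]
    show _ = (t • y) v
    rw [← hy']
    show _ = t • (∑ i, w i • z i) v
    rw [Finset.sum_apply]
    rw [Finset.smul_sum]
    refine Finset.sum_congr rfl fun i _ => ?_
    rw [Pi.smul_apply, smul_smul]
  · rw [Matrix.trace_sum]
    have : ∀ i, ((t * w i) • Matrix.vecMulVec (u i) (u i)).trace = t * w i := by
      intro i
      rw [Matrix.trace_smul]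
      have h2 : (Matrix.vecMulVec (u i) (u i)).trace = 1 := by
        rw [my_trace_eq]
        rw [← hu i]
        exact Finset.sum_congr rfl fun a _ => by
          rw [Matrix.vecMulVec_apply, pow_two]
      rw [h2]
      simp
    rw [Finset.sum_congr rfl fun i _ => this i, ← Finset.mul_sum, hwsum, mul_one]

end CMStruct

namespace CMStruct
variable (S : CMStruct)

lemma stdE_self (v : Fin S.V) (i : Fin (S.n (S.r v))) (j : Fin (S.n (S.c v))) :
    S.stdE ⟨v, (i, j)⟩ v = Matrix.single i j 1 := by
  show S.stdBasis v i j v = _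
  rw [CMStruct.stdBasis, dif_pos rfl]
  rfl

lemma stdE_ne (v : Fin S.V) (i : Fin (S.n (S.r v))) (j : Fin (S.n (S.c v))) (w : Fin S.V)
    (h : v ≠ w) : S.stdE ⟨v, (i, j)⟩ w = 0 := by
  show S.stdBasis v i j w = _
  rw [CMStruct.stdBasis, dif_neg h]

lemma stdBasisMatrix_entry {m' n' : Type*} [DecidableEq m'] [DecidableEq n']
    (i p : m') (j q : n') :
    Matrix.single i j (1:ℝ) p q = if i = p ∧ j = q then 1 else 0 := rfl

lemma expand_basis (X : S.Space) :
    X = ∑ e : S.IdxE, (X e.1 e.2.1 e.2.2) • S.stdE e := by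
  funext w
  ext p q
  have h1 : (∑ e : S.IdxE, (X e.1 e.2.1 e.2.2) • S.stdE e) w p q
      = ∑ e : S.IdxE, (X e.1 e.2.1 e.2.2) * (S.stdE e w p q) := by
    simp [Finset.sum_apply, Matrix.sum_apply]
  rw [h1]
  rw [← Finset.univ_sigma_univ, Finset.sum_sigma]
  rw [Finset.sum_eq_single w]
  · rw [Fintype.sum_prod_type]
    have h2 : ∀ (i : Fin (S.n (S.r w))) (j : Fin (S.n (S.c w))),
        X w i j * S.stdE ⟨w, (i, j)⟩ w p q = if i = p ∧ j = q then X w i j else 0 := by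
      intro i j
      rw [stdE_self, stdBasisMatrix_entry]
      split <;> simp
    simp only [h2]
    simp [Finset.sum_ite_eq, ite_and]
  · intro v _ hv
    refine Finset.sum_eq_zero fun ij _ => ?_
    rw [stdE_ne S v ij.1 ij.2 w hv]
    simp
  · intro h
    exact absurd (Finset.mem_univ w) h

/-- evaluation of a two-point supported atom -/
lemma atomOf_two (v : Fin S.V) (i : Fin (S.n (S.r v))) (j : Fin (S.n (S.c v))) (x y : ℝ) :
    S.atomOf (fun d => if d = ⟨S.r v, i⟩ then x else if d = ⟨S.c v, j⟩ then y else 0)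
      = (x * y) • S.stdE ⟨v, (i, j)⟩ := by
  set a : S.Idx := ⟨S.r v, i⟩ with ha
  set b : S.Idx := ⟨S.c v, j⟩ with hb
  set u : S.Idx → ℝ := fun d => if d = a then x else if d = b then y else 0 with hu
  have hab : S.r v ≠ S.c v := S.ne v
  have hane : a ≠ b := by
    intro h
    exact hab (congrArg Sigma.fst h)
  have hua : u a = x := by simp [hu]
  have hub : u b = y := by simp [hu, Ne.symm hane]
  have hu0 : ∀ d, d ≠ a → d ≠ b → u d = 0 := by
    intro d h1 h2
    simp [hu, h1, h2]
  have husupp : ∀ d, u d ≠ 0 → d = a ∨ d = b := by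
    intro d hd
    by_contra hcon
    push_neg at hcon
    exact hd (hu0 d hcon.1 hcon.2)
  funext w
  ext p q
  show S.Pv w (Matrix.vecMulVec u u) p q = ((x*y) • S.stdE ⟨v,(i,j)⟩) w p q
  rw [Pv_apply, Matrix.vecMulVec_apply]
  by_cases hw : w = v
  · subst hw
    rw [show ((x*y) • S.stdE ⟨w,(i,j)⟩) w p q = (x*y) * (S.stdE ⟨w,(i,j)⟩ w p q) from rfl]
    rw [stdE_self, stdBasisMatrix_entry]
    have h1 : u ⟨S.r w, p⟩ = if i = p then x else 0 := by
      by_cases hp : i = p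
      · subst hp
        exact hua.trans (by rw [if_pos rfl])
      · rw [if_neg hp]
        refine hu0 _ (fun h => hp ?_) (fun h => hab (congrArg Sigma.fst h))
        · have := (Sigma.mk.inj_iff.mp h).2
          exact (eq_of_heq this).symm
    have h2 : u ⟨S.c w, q⟩ = if j = q then y else 0 := by
      by_cases hq : j = q
      · subst hq
        exact hub.trans (by rw [if_pos rfl])
      · rw [if_neg hq]
        refine hu0 _ (fun h => hab (congrArg Sigma.fst h).symm) (fun h => hq ?_)
        · have := (Sigma.mk.inj_iff.mp h).2
          exact (eq_of_heq this).symm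
    rw [h1, h2]
    by_cases hp : i = p <;> by_cases hq : j = q <;> simp [hp, hq]
  · rw [show ((x*y) • S.stdE ⟨v,(i,j)⟩) w p q = (x*y) * (S.stdE ⟨v,(i,j)⟩ w p q) from rfl]
    rw [stdE_ne S v i j w (fun h => hw h.symm)]
    rw [show (0 : Matrix (Fin (S.n (S.r w))) (Fin (S.n (S.c w))) ℝ) p q = 0 from rfl, mul_zero]
    by_cases h1 : u ⟨S.r w, p⟩ = 0
    · rw [h1, zero_mul]
    by_cases h2 : u ⟨S.c w, q⟩ = 0
    · rw [h2, mul_zero]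
    exfalso
    have hrw : S.r w = S.r v ∨ S.r w = S.c v := by
      rcases husupp _ h1 with h | h
      · exact Or.inl (congrArg Sigma.fst h)
      · exact Or.inr (congrArg Sigma.fst h)
    have hcw : S.c w = S.r v ∨ S.c w = S.c v := by
      rcases husupp _ h2 with h | h
      · exact Or.inl (congrArg Sigma.fst h)
      · exact Or.inr (congrArg Sigma.fst h)
    have hne' : S.r w ≠ S.c w := S.ne w
    rcases hrw with h3 | h3 <;> rcases hcw with h4 | h4
    · exact hne' (h3.trans h4.symm)
    · exact hw (S.uniq w v (Or.inl ⟨h3, h4⟩))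
    · exact hw (S.uniq w v (Or.inr ⟨h3, h4⟩))
    · exact hne' (h3.trans h4.symm)

lemma two_point_norm (v : Fin S.V) (i : Fin (S.n (S.r v))) (j : Fin (S.n (S.c v))) (x y : ℝ) :
    ∑ d, ((fun d => if d = ⟨S.r v, i⟩ then x else if d = (⟨S.c v, j⟩ : S.Idx) then y else 0) d)^2
      = x^2 + y^2 := by
  set a : S.Idx := ⟨S.r v, i⟩ with ha
  set b : S.Idx := ⟨S.c v, j⟩ with hb
  have hane : a ≠ b := fun h => S.ne v (congrArg Sigma.fst h)
  have key : ∀ d : S.Idx, ((if d = a then x else if d = b then y else 0))^2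
      = (if d = a then x^2 else 0) + (if d = b then y^2 else 0) := by
    intro d
    by_cases h1 : d = a
    · subst h1
      simp [hane]
    · by_cases h2 : d = b
      · subst h2
        simp [h1]
      · simp [h1, h2]
  simp only [key]
  rw [Finset.sum_add_distrib]
  simp [Finset.sum_ite_eq']

end CMStruct

namespace CMStruct
variable (S : CMStruct)

lemma pair_sq_le {u : S.Idx → ℝ} (hu : ∑ d, (u d)^2 = 1) {a b : S.Idx} (hab : a ≠ b) :
    (u a)^2 + (u b)^2 ≤ 1 := by
  have h1 : ∑ d ∈ ({a, b} : Finset S.Idx), (u d)^2 = (u a)^2 + (u b)^2 :=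
    Finset.sum_pair hab
  have h2 : ∑ d ∈ ({a, b} : Finset S.Idx), (u d)^2 ≤ ∑ d, (u d)^2 :=
    Finset.sum_le_sum_of_subset_of_nonneg (Finset.subset_univ _) (fun d _ _ => sq_nonneg _)
  rw [hu] at h2
  linarith

lemma atom_entry_le {σ : ℝ} (hσ : σ * σ = 1) (v : Fin S.V) (i : Fin (S.n (S.r v)))
    (j : Fin (S.n (S.c v))) {A : S.Space} (hA : A ∈ S.atomGen) :
    σ * A v i j ≤ 1/2 := by
  obtain ⟨u, hu, rfl⟩ := hA
  set a : S.Idx := ⟨S.r v, i⟩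
  set b : S.Idx := ⟨S.c v, j⟩
  have hab : a ≠ b := fun h => S.ne v (congrArg Sigma.fst h)
  have hval : (fun v => S.Pv v (Matrix.vecMulVec u u)) v i j = u a * u b := rfl
  rw [hval]
  have hp := S.pair_sq_le hu hab
  nlinarith [sq_nonneg (u a - σ * u b), sq_nonneg (u a + σ * u b)]

lemma atom_entry_eq {σ : ℝ} (hσ : σ * σ = 1) (v : Fin S.V) (i : Fin (S.n (S.r v)))
    (j : Fin (S.n (S.c v))) {A : S.Space} (hA : A ∈ S.atomGen)
    (heq : σ * A v i j = 1/2) : A = (σ * (1/2)) • S.stdE ⟨v, (i, j)⟩ := by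
  obtain ⟨u, hu, rfl⟩ := hA
  set a : S.Idx := ⟨S.r v, i⟩ with ha
  set b : S.Idx := ⟨S.c v, j⟩ with hb
  have hab : a ≠ b := fun h => S.ne v (congrArg Sigma.fst h)
  have hval : (fun v => S.Pv v (Matrix.vecMulVec u u)) v i j = u a * u b := rfl
  rw [hval] at heq
  -- remainder sum
  have hsplit : ∑ d ∈ Finset.univ \ ({a, b} : Finset S.Idx), (u d)^2
      + ∑ d ∈ ({a, b} : Finset S.Idx), (u d)^2 = 1 := by
    rw [Finset.sum_sdiff (Finset.subset_univ _), hu]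
  have hpair : ∑ d ∈ ({a, b} : Finset S.Idx), (u d)^2 = (u a)^2 + (u b)^2 :=
    Finset.sum_pair hab
  set R := ∑ d ∈ Finset.univ \ ({a, b} : Finset S.Idx), (u d)^2 with hR
  have hRnn : 0 ≤ R := Finset.sum_nonneg fun d _ => sq_nonneg _
  have e1 : (u a - σ * u b)^2 = (u a)^2 + (u b)^2 - 1 := by
    linear_combination (-2 : ℝ) * heq + (u b)^2 * hσ
  have hR0 : R = 0 ∧ (u a - σ * u b)^2 = 0 := by
    constructor <;> nlinarith [sq_nonneg (u a - σ * u b), hsplit, hpair]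
  have hae : u a = σ * u b := by
    have := (pow_eq_zero_iff (two_ne_zero)).mp hR0.2
    linarith [this]
  have hsum1 : (u a)^2 + (u b)^2 = 1 := by
    have := hR0.1
    rw [hR] at this  -- R = sum; already
    nlinarith [hsplit, hpair, hR0.1]
  have hb2 : (u b)^2 = 1/2 := by
    rw [hae] at hsum1
    linear_combination (1/2) * hsum1 - (1/2) * (u b)^2 * hσ
  have hrest : ∀ d, d ≠ a → d ≠ b → u d = 0 := by
    intro d h1 h2
    have hd : d ∈ Finset.univ \ ({a, b} : Finset S.Idx) := by
      simp [h1, h2]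
    have := (Finset.sum_eq_zero_iff_of_nonneg
      (fun d _ => sq_nonneg (u d))).mp hR0.1 d hd
    exact (pow_eq_zero_iff (two_ne_zero)).mp this
  have hueq : u = fun d => if d = a then u a else if d = b then u b else 0 := by
    funext d
    by_cases h1 : d = a
    · simp [h1]
    · by_cases h2 : d = b
      · simp [h1, h2, Ne.symm hab]
      · simp [h1, h2, hrest d h1 h2]
  have hA2 : (fun v => S.Pv v (Matrix.vecMulVec u u)) = S.atomOf u := rfl
  rw [hA2, hueq, ha, hb]
  rw [S.atomOf_two v i j (u a) (u b)]
  congr 1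
  rw [hae]
  linear_combination σ * hb2

lemma max_atom_mem {σ : ℝ} (hσ : σ * σ = 1) (v : Fin S.V) (i : Fin (S.n (S.r v)))
    (j : Fin (S.n (S.c v))) : (σ * (1/2)) • S.stdE ⟨v, (i, j)⟩ ∈ S.atomGen := by
  have h2 : (0:ℝ) ≤ 1/2 := by norm_num
  have hs : Real.sqrt (1/2) * Real.sqrt (1/2) = 1/2 := Real.mul_self_sqrt h2
  have hnorm := S.two_point_norm v i j (σ * Real.sqrt (1/2)) (Real.sqrt (1/2))
  have hnorm1 : ∑ d, ((fun d => if d = (⟨S.r v, i⟩ : S.Idx) then σ * Real.sqrt (1/2)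
      else if d = (⟨S.c v, j⟩ : S.Idx) then Real.sqrt (1/2) else 0) d)^2 = 1 := by
    rw [hnorm]
    nlinarith [hs, hσ]
  have := S.atomOf_mem_atomGen hnorm1
  rw [S.atomOf_two v i j (σ * Real.sqrt (1/2)) (Real.sqrt (1/2))] at this
  have heq : σ * Real.sqrt (1/2) * Real.sqrt (1/2) = σ * (1/2) := by
    rw [mul_assoc, hs]
  rwa [heq] at this

lemma entry_linear (z1 z2 : S.Space) (t1 t2 : ℝ) (v : Fin S.V) (i : Fin (S.n (S.r v)))
    (j : Fin (S.n (S.c v))) :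
    (t1 • z1 + t2 • z2) v i j = t1 * z1 v i j + t2 * z2 v i j := rfl

lemma hull_entry_le {σ : ℝ} (hσ : σ * σ = 1) (v : Fin S.V) (i : Fin (S.n (S.r v)))
    (j : Fin (S.n (S.c v))) {z : S.Space} (hz : z ∈ convexHull ℝ S.atomGen) :
    σ * z v i j ≤ 1/2 := by
  have hconv : Convex ℝ {z : S.Space | σ * z v i j ≤ 1/2} := by
    intro z1 h1 z2 h2 t1 t2 ht1 ht2 hts
    simp only [Set.mem_setOf_eq] at *
    rw [S.entry_linear z1 z2 t1 t2 v i j]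
    nlinarith [mul_le_mul_of_nonneg_left h1 ht1, mul_le_mul_of_nonneg_left h2 ht2]
  have hsub : S.atomGen ⊆ {z : S.Space | σ * z v i j ≤ 1/2} :=
    fun A hA => S.atom_entry_le hσ v i j hA
  exact convexHull_min hsub hconv hz

lemma hull_entry_eq {σ : ℝ} (hσ : σ * σ = 1) (v : Fin S.V) (i : Fin (S.n (S.r v)))
    (j : Fin (S.n (S.c v))) {z : S.Space} (hz : z ∈ convexHull ℝ S.atomGen)
    (he : σ * z v i j = 1/2) : z = (σ * (1/2)) • S.stdE ⟨v, (i, j)⟩ := by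
  obtain ⟨ι, hι, zz, w, hzs, hind, hwpos, hwsum, hzsum⟩ :=
    eq_pos_convex_span_of_mem_convexHull hz
  have hterm : ∀ k, σ * (zz k) v i j ≤ 1/2 :=
    fun k => S.atom_entry_le hσ v i j (hzs (Set.mem_range_self k))
  have hval : σ * z v i j = ∑ k, w k * (σ * (zz k) v i j) := by
    rw [← hzsum]
    have h3 : (∑ k, w k • zz k) v i j = ∑ k, w k * (zz k) v i j := by
      simp [Finset.sum_apply, Matrix.sum_apply]
    rw [h3, Finset.mul_sum]
    exact Finset.sum_congr rfl fun k _ => by ring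
  have hzero : ∑ k, w k * (1/2 - σ * (zz k) v i j) = 0 := by
    have h4 : ∑ k, w k * (1/2 - σ * (zz k) v i j)
        = (∑ k, w k) * (1/2) - ∑ k, w k * (σ * (zz k) v i j) := by
      rw [Finset.sum_mul, ← Finset.sum_sub_distrib]
      exact Finset.sum_congr rfl fun k _ => by ring
    rw [h4, hwsum, ← hval, he]
    ring
  have hfe := (Finset.sum_eq_zero_iff_of_nonneg
    (fun k _ => mul_nonneg (hwpos k).le (by linarith [hterm k]))).mp hzero
  have hkeq : ∀ k, zz k = (σ * (1/2)) • S.stdE ⟨v, (i, j)⟩ := by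
    intro k
    have h0 := hfe k (Finset.mem_univ k)
    have h5 : σ * (zz k) v i j = 1/2 := by
      rcases mul_eq_zero.mp h0 with h | h
      · exact absurd h (hwpos k).ne'
      · linarith
    exact S.atom_entry_eq hσ v i j (hzs (Set.mem_range_self k)) h5
  rw [← hzsum, Finset.sum_congr rfl (fun k _ => by rw [hkeq k]), ← Finset.sum_smul,
    hwsum, one_smul]

lemma half_stdE_extreme {σ : ℝ} (hσ : σ * σ = 1) (v : Fin S.V) (i : Fin (S.n (S.r v)))
    (j : Fin (S.n (S.c v))) : (σ * (1/2)) • S.stdE ⟨v, (i, j)⟩ ∈ S.atoms := by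
  set p := (σ * (1/2)) • S.stdE ⟨v, (i, j)⟩ with hp
  have hpC : p ∈ convexHull ℝ S.atomGen :=
    subset_convexHull ℝ _ (S.max_atom_mem hσ v i j)
  have hfp : σ * p v i j = 1/2 := by
    have h6 : p v i j = σ * (1/2) * (S.stdE ⟨v,(i,j)⟩ v i j) := rfl
    rw [h6, stdE_self, stdBasisMatrix_entry]
    simp
    nlinarith [hσ]
  rw [CMStruct.atoms, mem_extremePoints]
  refine ⟨hpC, ?_⟩
  intro x1 h1 x2 h2 hseg
  obtain ⟨t1, t2, ht1, ht2, hts, heq⟩ := hseg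
  have hx1 : σ * x1 v i j ≤ 1/2 := S.hull_entry_le hσ v i j h1
  have hx2 : σ * x2 v i j ≤ 1/2 := S.hull_entry_le hσ v i j h2
  have hcomb : t1 * (σ * x1 v i j) + t2 * (σ * x2 v i j) = 1/2 := by
    have h7 := congrArg (fun z : S.Space => σ * z v i j) heq
    beta_reduce at h7
    rw [S.entry_linear x1 x2 t1 t2 v i j] at h7
    rw [hfp] at h7
    linarith [h7]  -- σ*(t1 a + t2 b) = t1 σa + t2 σb
  have he1 : σ * x1 v i j = 1/2 := by nlinarith
  have he2 : σ * x2 v i j = 1/2 := by nlinarith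
  exact ⟨S.hull_entry_eq hσ v i j h1 he1, S.hull_entry_eq hσ v i j h2 he2⟩

end CMStruct

namespace CMStruct
variable (S : CMStruct)

lemma atomOf_continuous : Continuous S.atomOf := by
  apply continuous_pi
  intro v
  apply continuous_matrix
  intro i j
  exact ((continuous_apply (⟨S.r v, i⟩ : S.Idx)).mul (continuous_apply (⟨S.c v, j⟩ : S.Idx)))

lemma atomGen_compact : IsCompact S.atomGen := by
  have h1 : S.atomGen = S.atomOf '' {u : S.Idx → ℝ | ∑ a, (u a)^2 = 1} := by
    ext A
    constructor
    · rintro ⟨u, hu, rfl⟩; exact ⟨u, hu, rfl⟩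
    · rintro ⟨u, hu, rfl⟩; exact ⟨u, hu, rfl⟩
  rw [h1]
  have hclosed : IsClosed {u : S.Idx → ℝ | ∑ a, (u a)^2 = 1} :=
    isClosed_eq (continuous_finset_sum _ fun a _ => (continuous_apply a).pow 2) continuous_const
  have hsub : {u : S.Idx → ℝ | ∑ a, (u a)^2 = 1} ⊆ Metric.closedBall 0 1 := by
    intro u hu
    rw [Metric.mem_closedBall, dist_pi_le_iff zero_le_one]
    intro a
    have h2 : (u a)^2 ≤ 1 := by
      rw [← hu]
      exact Finset.single_le_sum (f := fun a => (u a)^2) (fun a _ => sq_nonneg _)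
        (Finset.mem_univ a)
    have h3 : |u a| ≤ 1 := by
      rw [← Real.sqrt_one]
      rw [show |u a| = Real.sqrt ((u a)^2) from (Real.sqrt_sq_eq_abs _).symm]
      exact Real.sqrt_le_sqrt h2
    simpa [Real.dist_eq] using h3
  have hS : IsCompact {u : S.Idx → ℝ | ∑ a, (u a)^2 = 1} :=
    (isCompact_closedBall _ _).of_isClosed_subset hclosed hsub
  exact hS.image S.atomOf_continuous

lemma hull_compact : IsCompact (convexHull ℝ S.atomGen) :=
  myIsCompact_convexHull S.atomGen_compact

lemma km_closure : closure (convexHull ℝ S.atoms) = convexHull ℝ S.atomGen :=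
  closure_convexHull_extremePoints S.hull_compact (convex_convexHull ℝ _)

lemma atoms_hull_subset : convexHull ℝ S.atoms ⊆ convexHull ℝ S.atomGen :=
  convexHull_min (Set.Subset.trans extremePoints_convexHull_subset (subset_convexHull ℝ _))
    (convex_convexHull ℝ _)

lemma half_stdE_extreme' {σ : ℝ} (hσ : σ * σ = 1) (e : S.IdxE) :
    (σ * (1/2)) • S.stdE e ∈ S.atoms := by
  obtain ⟨v, i, j⟩ := e
  exact S.half_stdE_extreme hσ v i j

lemma zero_mem_hull (e : S.IdxE) : (0 : S.Space) ∈ convexHull ℝ S.atoms := by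
  have h1 := S.half_stdE_extreme' (σ := 1) (by norm_num) e
  have h2 := S.half_stdE_extreme' (σ := -1) (by norm_num) e
  have key : (0 : S.Space) = (1/2 : ℝ) • (((1:ℝ) * (1/2)) • S.stdE e)
      + (1/2 : ℝ) • (((-1:ℝ) * (1/2)) • S.stdE e) := by
    rw [smul_smul, smul_smul, ← add_smul]
    norm_num
  rw [key]
  exact (convex_convexHull ℝ S.atoms) (subset_convexHull ℝ _ h1) (subset_convexHull ℝ _ h2)
    (by norm_num) (by norm_num) (by norm_num)

lemma zero_mem_interior (e₀ : S.IdxE) :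
    (0 : S.Space) ∈ interior (convexHull ℝ S.atoms) := by
  classical
  set m : ℝ := (Fintype.card S.IdxE : ℝ) with hm
  have hm0 : 0 ≤ m := Nat.cast_nonneg _
  set δ : ℝ := (2 * (m + 1))⁻¹ with hδ
  have hδpos : 0 < δ := by positivity
  have hδeq : (2 * (m + 1)) * δ = 1 := by
    rw [hδ]
    field_simp
  set U : Set S.Space := ⋂ e : S.IdxE, {Y : S.Space | |Y e.1 e.2.1 e.2.2| < δ} with hU
  have hUopen : IsOpen U := by
    apply isOpen_iInter_of_finite
    intro e
    have hcoord : Continuous fun Y : S.Space => Y e.1 e.2.1 e.2.2 :=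
      (continuous_apply e.2.2).comp ((continuous_apply e.2.1).comp (continuous_apply e.1))
    exact isOpen_lt hcoord.abs continuous_const
  have hU0 : (0 : S.Space) ∈ U := by
    rw [hU, Set.mem_iInter]
    intro e
    show |(0 : S.Space) e.1 e.2.1 e.2.2| < δ
    simpa using hδpos
  rw [mem_interior]
  refine ⟨U, ?_, hUopen, hU0⟩
  intro Y hY
  have hcs : ∀ e : S.IdxE, |Y e.1 e.2.1 e.2.2| < δ := fun e => Set.mem_iInter.mp hY e
  set c : S.IdxE → ℝ := fun e => Y e.1 e.2.1 e.2.2 with hc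
  set w : Option S.IdxE → ℝ := fun o => o.elim (1 - ∑ e, 2 * |c e|) (fun e => 2 * |c e|) with hw
  set z : Option S.IdxE → S.Space := fun o => o.elim 0
    (fun e => (((if 0 ≤ c e then (1:ℝ) else -1)) * (1/2)) • S.stdE e) with hz
  have hsum_le : ∑ e, 2 * |c e| ≤ 1 := by
    have h1 : ∑ e, 2 * |c e| ≤ ∑ _e : S.IdxE, 2 * δ :=
      Finset.sum_le_sum (fun e _ => by linarith [(hcs e).le, abs_nonneg (c e)])
    rw [Finset.sum_const, nsmul_eq_mul, Finset.card_univ] at h1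
    have h2 : m * (2 * δ) ≤ 1 := by nlinarith
    calc ∑ e, 2 * |c e| ≤ m * (2 * δ) := h1
      _ ≤ 1 := h2
  have hw0 : ∀ o, 0 ≤ w o := by
    intro o
    cases o with
    | none => simp only [hw, Option.elim]; linarith
    | some e => simp only [hw, Option.elim]; positivity
  have hwsum : ∑ o : Option S.IdxE, w o = 1 := by
    rw [Fintype.sum_option]
    simp only [hw, Option.elim]
    ring
  have hzmem : ∀ o, z o ∈ convexHull ℝ S.atoms := by
    intro o
    cases o with
    | none => exact S.zero_mem_hull e₀
    | some e =>
      simp only [hz, Option.elim]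
      refine subset_convexHull ℝ _ (S.half_stdE_extreme' ?_ e)
      split <;> norm_num
  have hYsum : Y = ∑ o : Option S.IdxE, w o • z o := by
    rw [Fintype.sum_option]
    simp only [hw, hz, Option.elim]
    rw [smul_zero, zero_add]
    have h3 : ∀ e : S.IdxE,
        (2 * |c e|) • (((if 0 ≤ c e then (1:ℝ) else -1) * (1/2)) • S.stdE e)
          = c e • S.stdE e := by
      intro e
      rw [smul_smul]
      congr 1
      by_cases h : 0 ≤ c e
      · rw [if_pos h, abs_of_nonneg h]; ring
      · rw [if_neg h, abs_of_neg (not_le.mp h)]; ring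
    rw [Finset.sum_congr rfl fun e _ => h3 e]
    exact S.expand_basis Y
  rw [hYsum]
  exact (convex_convexHull ℝ S.atoms).sum_mem (fun o _ => hw0 o) hwsum (fun o _ => hzmem o)

end CMStruct

/-- For `𝒳 ∈ 𝔛̄`, the atomic norm equals the minimum of `tr Z` over
PSD matrices `Z` with `P_v Z = X_v` for all `v` (and this minimum is attained). -/
theorem atomicNorm_eq_min_trace_psd (S : CMStruct) (X : S.Space) (hX : X ∈ S.Xbar) :
    IsLeast {t : ℝ | ∃ Z : Matrix S.Idx S.Idx ℝ,
        Z.PosSemidef ∧ (∀ v, S.Pv v Z = X v) ∧ t = Z.trace}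
      (S.atomicNorm X) := by
  classical
  by_cases hX0 : X = 0
  · subst hX0
    constructor
    · refine ⟨0, ⟨?_, ?_⟩, ?_, ?_⟩
      · show (0 : Matrix S.Idx S.Idx ℝ)ᴴ = 0
        simp
      · intro x
        simp [Matrix.mulVec_zero]
      · intro v
        ext p q
        rw [S.Pv_apply]
        simp
      · rw [Matrix.trace_zero]
        exact gauge_zero
    · rintro t ⟨Z, hZ, hb, rfl⟩
      rw [show S.atomicNorm 0 = 0 from gauge_zero]
      exact psd_trace_nonneg hZ
  · have hex : ∃ (v : Fin S.V) (i : Fin (S.n (S.r v))) (j : Fin (S.n (S.c v))),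
        X v i j ≠ 0 := by
      by_contra hc
      push_neg at hc
      apply hX0
      funext v
      ext i j
      simpa using hc v i j
    obtain ⟨v₀, i₀, j₀, hv₀⟩ := hex
    set ε := |X v₀ i₀ j₀| with hε
    have hεpos : 0 < ε := abs_pos.mpr hv₀
    have hCcomp : IsCompact (convexHull ℝ S.atomGen) := S.hull_compact
    have hKM := S.km_closure
    have hsubC := S.atoms_hull_subset
    have h0hull : (0 : S.Space) ∈ convexHull ℝ S.atoms := S.zero_mem_hull ⟨v₀, (i₀, j₀)⟩
    have h0int : (0 : S.Space) ∈ interior (convexHull ℝ S.atoms) :=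
      S.zero_mem_interior ⟨v₀, (i₀, j₀)⟩
    have hFeps : ∀ (Z : Matrix S.Idx S.Idx ℝ), Z.PosSemidef → (∀ v, S.Pv v Z = X v) →
        ε ≤ Z.trace := by
      intro Z hZ hb
      have h1 := psd_abs_entry_le_trace hZ ⟨S.r v₀, i₀⟩ ⟨S.c v₀, j₀⟩
      rw [show Z ⟨S.r v₀, i₀⟩ ⟨S.c v₀, j₀⟩ = X v₀ i₀ j₀ from by rw [← hb v₀]; rfl] at h1
      exact h1
    -- bumping lemma
    have hbump : ∀ t : ℝ, 0 < t → X ∈ t • convexHull ℝ S.atomGen →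
        ∀ ε' : ℝ, 0 < ε' → X ∈ (t + ε') • convexHull ℝ S.atoms := by
      intro t ht hmem ε' hε'
      have hyC : t⁻¹ • X ∈ closure (convexHull ℝ S.atoms) := by
        rw [hKM]
        exact (mem_smul_set_iff_inv_smul_mem₀ (ne_of_gt ht) _ _).mp hmem
      have hcombo : (t/(t+ε')) • (t⁻¹ • X) + (ε'/(t+ε')) • (0 : S.Space)
          ∈ interior (convexHull ℝ S.atoms) :=
        (convex_convexHull ℝ S.atoms).combo_closure_interior_mem_interior hyC h0int
          (by positivity) (by positivity)
          (by rw [← add_div, div_self (by positivity)])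
      have heq2 : (t/(t+ε')) • (t⁻¹ • X) + (ε'/(t+ε')) • (0 : S.Space) = (t+ε')⁻¹ • X := by
        rw [smul_zero, add_zero, smul_smul]
        congr 1
        field_simp
      rw [heq2] at hcombo
      rw [mem_smul_set_iff_inv_smul_mem₀ (by positivity : (t + ε') ≠ 0)]
      exact interior_subset hcombo
    have hgauge_le : ∀ t : ℝ, 0 < t → X ∈ t • convexHull ℝ S.atomGen →
        S.atomicNorm X ≤ t := by
      intro t ht hmem
      refine le_of_forall_pos_le_add fun ε' hε' => ?_
      show gauge (convexHull ℝ S.atoms) X ≤ t + ε'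
      exact gauge_le_of_mem (by positivity) (hbump t ht hmem ε' hε')
    constructor
    · -- membership
      set Gs := {r : ℝ | 0 < r ∧ X ∈ r • convexHull ℝ S.atoms} with hGs
      have hadef : S.atomicNorm X = sInf Gs := rfl
      have hGne : Gs.Nonempty := by
        obtain ⟨R, U, hU⟩ := hX
        set W : Matrix S.Idx (Fin R) ℝ :=
          Matrix.of (fun (d : S.Idx) (ρ : Fin R) => U d.1 d.2 ρ) with hW
        have hZ₀psd : (W * Wᵀ).PosSemidef := by
          have h2 : W = (Wᵀ)ᴴ := by
            ext d ρ
            simp [Matrix.conjTranspose_apply]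
          have h3 : W * Wᵀ = (Wᵀ)ᴴ * Wᵀ := by rw [← h2]
          rw [h3]
          exact Matrix.posSemidef_conjTranspose_mul_self _
        have hZ₀b : ∀ v, S.Pv v (W * Wᵀ) = X v := by
          intro v
          ext p q
          rw [S.Pv_apply, hU v]
          simp [Matrix.mul_apply, hW, Matrix.transpose_apply]
        have htr0 : 0 < (W * Wᵀ).trace := lt_of_lt_of_le hεpos (hFeps _ hZ₀psd hZ₀b)
        have hmem := S.feas_mem_smul X (W * Wᵀ) hZ₀psd hZ₀b htr0
        exact ⟨(W * Wᵀ).trace + 1, by positivity, hbump _ htr0 hmem 1 one_pos⟩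
      have hge : ∀ r ∈ Gs, ε ≤ r := by
        rintro r ⟨hr0, hrmem⟩
        have hmem : X ∈ r • convexHull ℝ S.atomGen :=
          Set.smul_set_mono hsubC hrmem
        obtain ⟨Z, hZ, hb, htr⟩ := S.mem_smul_feas X hr0 hmem
        calc ε ≤ Z.trace := hFeps Z hZ hb
          _ = r := htr
      have hapos : ε ≤ S.atomicNorm X := by
        rw [hadef]
        exact le_csInf hGne hge
      have ha0 : 0 < S.atomicNorm X := lt_of_lt_of_le hεpos hapos
      set a := S.atomicNorm X with haa
      have hup : ∀ r ∈ Gs, ∀ r' : ℝ, r ≤ r' → r' ∈ Gs := by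
        rintro r ⟨hr0, hrmem⟩ r' hrr'
        have hr'0 : 0 < r' := lt_of_lt_of_le hr0 hrr'
        refine ⟨hr'0, ?_⟩
        rw [mem_smul_set_iff_inv_smul_mem₀ (ne_of_gt hr'0)]
        have hx : r⁻¹ • X ∈ convexHull ℝ S.atoms :=
          (mem_smul_set_iff_inv_smul_mem₀ (ne_of_gt hr0) _ _).mp hrmem
        have heq3 : r'⁻¹ • X = (r / r') • (r⁻¹ • X) + (1 - r/r') • (0 : S.Space) := by
          rw [smul_zero, add_zero, smul_smul]
          congr 1
          field_simp
        rw [heq3]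
        exact (convex_convexHull ℝ S.atoms) hx h0hull (by positivity)
          (by rw [sub_nonneg]; exact (div_le_one hr'0).mpr hrr') (by ring)
      have hseq : ∀ n : ℕ, (a + 1/(n+1)) ∈ Gs := by
        intro n
        have hpos : (0:ℝ) < 1/(n+1) := by positivity
        have hlt : sInf Gs < a + 1/(n+1) := by
          rw [← hadef]
          linarith
        obtain ⟨r, hr, hrlt⟩ := exists_lt_of_csInf_lt hGne hlt
        exact hup r hr _ hrlt.le
      have hposn : ∀ n : ℕ, (0:ℝ) < a + 1/(n+1) := fun n => by positivity
      have hlim : Filter.Tendsto (fun n : ℕ => (a + 1/(n+1))⁻¹ • X) Filter.atTop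
          (nhds (a⁻¹ • X)) := by
        have h1 : Filter.Tendsto (fun n : ℕ => a + 1/(n+1)) Filter.atTop (nhds a) := by
          have h2 := tendsto_one_div_add_atTop_nhds_zero_nat (𝕜 := ℝ)
          have h3 := (tendsto_const_nhds (x := a) (f := Filter.atTop (α := ℕ))).add h2
          simpa using h3
        exact (h1.inv₀ (ne_of_gt ha0)).smul_const X
      have hmemC : a⁻¹ • X ∈ convexHull ℝ S.atomGen := by
        refine hCcomp.isClosed.mem_of_tendsto hlim (Filter.Eventually.of_forall fun n => ?_)
        exact hsubC ((mem_smul_set_iff_inv_smul_mem₀ (ne_of_gt (hposn n)) _ _).mp (hseq n).2)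
      have hmem : X ∈ a • convexHull ℝ S.atomGen :=
        (mem_smul_set_iff_inv_smul_mem₀ (ne_of_gt ha0) _ _).mpr hmemC
      obtain ⟨Z, hZ, hb, htr⟩ := S.mem_smul_feas X ha0 hmem
      exact ⟨Z, hZ, hb, htr.symm⟩
    · rintro t ⟨Z, hZ, hb, rfl⟩
      have ht : 0 < Z.trace := lt_of_lt_of_le hεpos (hFeps Z hZ hb)
      exact hgauge_le _ ht (S.feas_mem_smul X Z hZ hb ht)
end PSD
end

section
/- If the entity-relationship graph 𝒢 is bipartite, then every collective matrix admits a finite-dimensional joint factorization (𝔛 = 𝔛̄), and the atom set 𝒜 is centrally symmetric: 𝒜' ∈ 𝒜 if and only if −𝒜' ∈ 𝒜. -/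
open scoped BigOperators
open MeasureTheory ProbabilityTheory Matrix

/-- Auxiliary "entity factor" entries used to build a joint factorization when the
entity-relationship graph is bipartite. -/
def auxU (S : CMStruct) (f : Fin S.K → Bool) (X : S.Space) (k : Fin S.K)
    (a : Fin (S.n k)) : S.IdxE → ℝ
  | ⟨w, (i', j')⟩ =>
    (if (⟨k, a⟩ : S.Idx) = ⟨S.r w, i'⟩ then (if f k then X w i' j' else 1) else 0) +
    (if (⟨k, a⟩ : S.Idx) = ⟨S.c w, j'⟩ then (if f k then X w i' j' else 1) else 0)

lemma auxU_diag (S : CMStruct) (f : Fin S.K → Bool) (hf : ∀ v, f (S.r v) ≠ f (S.c v))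
    (X : S.Space) (v : Fin S.V) (i : Fin (S.n (S.r v))) (j : Fin (S.n (S.c v))) :
    auxU S f X (S.r v) i ⟨v, (i, j)⟩ * auxU S f X (S.c v) j ⟨v, (i, j)⟩ = X v i j := by
  have h2 : ¬((⟨S.r v, i⟩ : S.Idx) = ⟨S.c v, j⟩) := fun h => S.ne v (congrArg Sigma.fst h)
  have h3 : ¬((⟨S.c v, j⟩ : S.Idx) = ⟨S.r v, i⟩) := fun h => S.ne v (congrArg Sigma.fst h).symm
  have hv := hf v
  simp only [auxU, if_pos rfl, if_neg h2, if_neg h3, add_zero, zero_add]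
  cases hb : f (S.r v) <;> cases hb2 : f (S.c v) <;> rw [hb, hb2] at hv <;>
    simp_all

lemma auxU_term (S : CMStruct) (f : Fin S.K → Bool) (hf : ∀ v, f (S.r v) ≠ f (S.c v))
    (X : S.Space) (v : Fin S.V) (i : Fin (S.n (S.r v))) (j : Fin (S.n (S.c v)))
    (e : S.IdxE) :
    auxU S f X (S.r v) i e * auxU S f X (S.c v) j e
      = if e = ⟨v, (i, j)⟩ then X v i j else 0 := by
  by_cases h5 : e = ⟨v, (i, j)⟩
  · rw [if_pos h5, h5]
    exact auxU_diag S f hf X v i j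
  · rw [if_neg h5]
    obtain ⟨w, i', j'⟩ := e
    by_cases h1 : (⟨S.r v, i⟩ : S.Idx) = ⟨S.r w, i'⟩ <;>
    by_cases h2 : (⟨S.r v, i⟩ : S.Idx) = ⟨S.c w, j'⟩ <;>
    by_cases h3 : (⟨S.c v, j⟩ : S.Idx) = ⟨S.r w, i'⟩ <;>
    by_cases h4 : (⟨S.c v, j⟩ : S.Idx) = ⟨S.c w, j'⟩
    all_goals first
      | (exfalso; exact S.ne v ((congrArg Sigma.fst h1).trans (congrArg Sigma.fst h3).symm))
      | (exfalso; exact S.ne v ((congrArg Sigma.fst h2).trans (congrArg Sigma.fst h4).symm))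
      | (exfalso
         have hv : v = w := S.uniq v w (Or.inr ⟨congrArg Sigma.fst h2, congrArg Sigma.fst h3⟩)
         subst hv
         exact S.ne v (congrArg Sigma.fst h2))
      | (exfalso
         have hv : v = w := S.uniq v w (Or.inl ⟨congrArg Sigma.fst h1, congrArg Sigma.fst h4⟩)
         subst hv
         obtain ⟨-, hi⟩ := Sigma.mk.inj_iff.mp h1
         obtain ⟨-, hj⟩ := Sigma.mk.inj_iff.mp h4
         exact h5 (by rw [eq_of_heq hi, eq_of_heq hj]))
      | (simp only [auxU]; simp [h1, h2, h3, h4])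

lemma hasJF_of_bipartite (S : CMStruct) (f : Fin S.K → Bool)
    (hf : ∀ v, f (S.r v) ≠ f (S.c v)) (X : S.Space) : S.HasJF X := by
  refine ⟨Fintype.card S.IdxE,
    fun k => Matrix.of fun a t => auxU S f X k a ((Fintype.equivFin S.IdxE).symm t), ?_⟩
  intro v
  ext i j
  rw [Matrix.mul_apply]
  have hsum := Equiv.sum_comp (Fintype.equivFin S.IdxE).symm
    (fun e => auxU S f X (S.r v) i e * auxU S f X (S.c v) j e)
  simp only [Matrix.transpose_apply, Matrix.of_apply]
  rw [hsum]
  simp only [auxU_term S f hf X v i j]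
  simp

lemma neg_mem_atomGen (S : CMStruct) (f : Fin S.K → Bool)
    (hf : ∀ v, f (S.r v) ≠ f (S.c v)) {A : S.Space} (hA : A ∈ S.atomGen) :
    -A ∈ S.atomGen := by
  obtain ⟨u, hu, rfl⟩ := hA
  refine ⟨fun a => (if f a.1 then -1 else 1) * u a, ?_, ?_⟩
  · refine (Finset.sum_congr rfl fun a _ => ?_).trans hu
    cases h : f a.1 <;> simp [h]
  · funext v
    ext i j
    simp only [Pi.neg_apply, Matrix.neg_apply, CMStruct.Pv, Matrix.vecMulVec_apply,
      Matrix.of_apply]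
    have hv := hf v
    cases h : f (S.r v) <;> cases h2 : f (S.c v) <;> rw [h, h2] at hv <;>
      simp [h, h2] at hv ⊢

lemma extremePoints_neg_mem {E : Type*} [AddCommGroup E] [Module ℝ E] {s : Set E}
    (hs : ∀ x ∈ s, -x ∈ s) {x : E} (hx : x ∈ Set.extremePoints ℝ s) :
    -x ∈ Set.extremePoints ℝ s := by
  obtain ⟨hxs, h⟩ := hx
  refine ⟨hs x hxs, fun y hy z hz hseg => ?_⟩
  have hx' : x ∈ openSegment ℝ (-y) (-z) := by
    obtain ⟨a, b, ha, hb, hab, h'⟩ := hseg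
    exact ⟨a, b, ha, hb, hab, by rw [smul_neg, smul_neg, ← neg_add, h', neg_neg]⟩
  have h1 := h (hs y hy) (hs z hz) hx'
  rw [← neg_neg y, h1]

/-- If `𝒢` is bipartite then `𝔛 = 𝔛̄` and the atom set is
centrally symmetric. -/
theorem bipartite_Xbar_univ_and_atoms_symm (S : CMStruct) (hbip : S.Bipartite) :
    S.Xbar = Set.univ ∧ ∀ A : S.Space, A ∈ S.atoms ↔ -A ∈ S.atoms := by
  obtain ⟨f, hf⟩ := hbip
  constructor
  · ext X
    simp only [Set.mem_univ, iff_true]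
    exact hasJF_of_bipartite S f hf X
  · have hsym : ∀ x ∈ convexHull ℝ S.atomGen, -x ∈ convexHull ℝ S.atomGen := by
      intro x hx
      have hsub : S.atomGen ⊆ -S.atomGen := fun A hA => by
        rw [Set.mem_neg]; exact neg_mem_atomGen S f hf hA
      have hx' : x ∈ convexHull ℝ (-S.atomGen) := convexHull_mono hsub hx
      rw [convexHull_neg, Set.mem_neg] at hx'
      exact hx'
    intro A
    constructor
    · intro hA
      exact extremePoints_neg_mem hsym hA
    · intro hA
      have h := extremePoints_neg_mem hsym hA
      rwa [neg_neg] at h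
end
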